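/- arXiv:2108.03153 — 2 statements merged into one kernel-verified Lean document; each statement's English description precedes it below -/
import Mathlib

section
/- Let A be a Noether R-algebra and let a ⊆ R be an ideal such that R/a is an artinian ring. For every a-adically complete flat right A-module F, the canonical map F → F ⊗_R (R/a) is a flat cover in the category of right A-modules. -/
set_option maxHeartbeats 1000000


/-!
Common definitions: module-theoretic notions over a (possibly noncommutative) ring,
notions relative to a central base ring, and Hom-module structures.
Right `A`-modules are treated as left `Aᵐᵒᵖ`-modules.
-/

universe u

open MulOpposite

section AnyRing

variable {S : Type u} [Ring S]

/-- Flatness of a left `S`-module, via the standard equational criterion. -/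
def ModFlat (S : Type u) [Ring S] (M : Type u) [AddCommGroup M] [Module S M] : Prop :=
  ∀ (n : ℕ) (a : Fin n → S) (x : Fin n → M), ∑ i, a i • x i = 0 →
    ∃ (m : ℕ) (b : Fin n → Fin m → S) (y : Fin m → M),
      (∀ i, x i = ∑ j, b i j • y j) ∧ ∀ j, ∑ i, a i * b i j = 0

/-- `M` is cotorsion: every extension of a flat module by `M` splits
(equivalently, `Ext¹(F, M) = 0` for all flat `F`). -/
def ModCotorsion (S : Type u) [Ring S] (M : Type u) [AddCommGroup M] [Module S M] : Prop :=
  ∀ (X : Type u) [AddCommGroup X] [Module S X], ∀ i : M →ₗ[S] X,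
    Function.Injective i → ModFlat S (X ⧸ LinearMap.range i) →
      ∃ r : X →ₗ[S] M, r ∘ₗ i = LinearMap.id

/-- `M` is flat cotorsion. -/
def ModFlatCotorsion (S : Type u) [Ring S] (M : Type u) [AddCommGroup M] [Module S M] : Prop :=
  ModFlat S M ∧ ModCotorsion S M

/-- `f : F → M` is a flat cover: `F` is flat, every map from a flat module to `M`
factors through `f`, and `f` is right minimal. -/
def IsFlatCover {F M : Type u} [AddCommGroup F] [Module S F] [AddCommGroup M] [Module S M]
    (f : F →ₗ[S] M) : Prop :=
  ModFlat S F ∧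
    (∀ (G : Type u) [AddCommGroup G] [Module S G], ModFlat S G →
      ∀ g : G →ₗ[S] M, ∃ h : G →ₗ[S] F, f ∘ₗ h = g) ∧
    ∀ g : F →ₗ[S] F, f ∘ₗ g = f → Function.Bijective g

/-- `f : M → I` is an injective envelope: an essential monomorphism into an
injective module. -/
def IsInjEnvelope {M I : Type u} [AddCommGroup M] [Module S M] [AddCommGroup I] [Module S I]
    (f : M →ₗ[S] I) : Prop :=
  Function.Injective f ∧ Module.Injective S I ∧
    ∀ K : Submodule S I, K ⊓ LinearMap.range f = ⊥ → K = ⊥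

/-- `f` is a pure monomorphism: injective, and every finite system of linear
equations with constants in `M` solvable in `N` is solvable in `M`. -/
def IsPureMono {M N : Type u} [AddCommGroup M] [Module S M] [AddCommGroup N] [Module S N]
    (f : M →ₗ[S] N) : Prop :=
  Function.Injective f ∧
    ∀ (k n : ℕ) (a : Fin k → Fin n → S) (c : Fin n → M),
      (∃ x : Fin k → N, ∀ j, f (c j) = ∑ i, a i j • x i) →
        ∃ y : Fin k → M, ∀ j, c j = ∑ i, a i j • y i

/-- `M` is pure-injective. -/
def ModPureInjective (S : Type u) [Ring S] (M : Type u) [AddCommGroup M] [Module S M] : Prop :=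
  ∀ (X Y : Type u) [AddCommGroup X] [Module S X] [AddCommGroup Y] [Module S Y],
    ∀ f : X →ₗ[S] Y, IsPureMono f → ∀ g : X →ₗ[S] M, ∃ h : Y →ₗ[S] M, h ∘ₗ f = g

/-- `f : M → H` is a pure-injective envelope: a left minimal pure monomorphism into a
pure-injective module. -/
def IsPureInjEnvelope {M H : Type u} [AddCommGroup M] [Module S M] [AddCommGroup H] [Module S H]
    (f : M →ₗ[S] H) : Prop :=
  IsPureMono f ∧ ModPureInjective S H ∧ ∀ g : H →ₗ[S] H, g ∘ₗ f = f → Function.Bijective g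

/-- `f : M → C` is a cotorsion envelope: a left minimal monomorphism into a cotorsion
module through which every map from `M` to a cotorsion module factors. -/
def IsCotorsionEnvelope {M C : Type u} [AddCommGroup M] [Module S M] [AddCommGroup C] [Module S C]
    (f : M →ₗ[S] C) : Prop :=
  Function.Injective f ∧ ModCotorsion S C ∧
    (∀ (C' : Type u) [AddCommGroup C'] [Module S C'], ModCotorsion S C' →
      ∀ g : M →ₗ[S] C', ∃ h : C →ₗ[S] C', h ∘ₗ f = g) ∧
    ∀ g : C →ₗ[S] C, g ∘ₗ f = f → Function.Bijective g

/-- An indecomposable module: nontrivial, and with no nontrivial direct sum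
decomposition. -/
def ModIndecomposable (S : Type u) [Ring S] (M : Type u) [AddCommGroup M] [Module S M] : Prop :=
  Nontrivial M ∧ ∀ N N' : Submodule S M, IsCompl N N' → N = ⊥ ∨ N' = ⊥

/-- A prime two-sided ideal of a possibly noncommutative ring, encoded as a left ideal
that is closed under right multiplication and satisfies `aSb ⊆ P → a ∈ P ∨ b ∈ P`. -/
def IsPrimeTwoSided (P : Ideal S) : Prop :=
  P ≠ ⊤ ∧ (∀ a ∈ P, ∀ b : S, a * b ∈ P) ∧
    ∀ a b : S, (∀ x : S, a * x * b ∈ P) → a ∈ P ∨ b ∈ P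

/-- A maximal two-sided ideal: a proper two-sided ideal that is maximal among proper
two-sided ideals. -/
def IsMaximalTwoSided (P : Ideal S) : Prop :=
  (∀ a ∈ P, ∀ b : S, a * b ∈ P) ∧ P ≠ ⊤ ∧
    ∀ Q : Ideal S, (∀ a ∈ Q, ∀ b : S, a * b ∈ Q) → P < Q → Q = ⊤

/-- The submodule `M·J` of a right `S`-module generated by the products `x • a`, `a ∈ J`. -/
def setSMulSub (J : Set S) (M : Type u) [AddCommGroup M] [Module Sᵐᵒᵖ M] : Submodule Sᵐᵒᵖ M :=
  Submodule.span Sᵐᵒᵖ {y | ∃ (x : M) (a : S), a ∈ J ∧ y = op a • x}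

/-- The submodule of a right `S`-module annihilated by a set `J` closed under left
multiplication (e.g. a left or two-sided ideal); this realizes `Hom_S(S/J, M)`. -/
def setAnnSub (J : Set S) (hJ : ∀ c : S, ∀ a ∈ J, c * a ∈ J)
    (M : Type u) [AddCommGroup M] [Module Sᵐᵒᵖ M] : Submodule Sᵐᵒᵖ M where
  carrier := {x | ∀ a ∈ J, op a • x = 0}
  add_mem' := fun {x y} hx hy a ha => by rw [smul_add, hx a ha, hy a ha, add_zero]
  zero_mem' := fun a _ => smul_zero _
  smul_mem' := fun c x hx a ha => by
    have h1 : (op a : Sᵐᵒᵖ) • c • x = op (c.unop * a) • x := by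
      rw [smul_smul]; rfl
    rw [h1, hx _ (hJ c.unop a ha)]

/-- The Jacobson radical of a ring, as a set: the intersection of all maximal left
ideals (which coincides with the two-sided Jacobson radical). -/
def jacobsonSet (T : Type u) [Ring T] : Set T :=
  {a : T | ∀ J : Ideal T, J.IsMaximal → a ∈ J}

/-- The contraction `ρ⁻¹(rad T)` of the Jacobson radical along a ring homomorphism. -/
def radContraction {S T : Type u} [Ring S] [Ring T] (ρ : S →+* T) : Set S :=
  ρ ⁻¹' jacobsonSet T

theorem radContraction_mul_mem {S T : Type u} [Ring S] [Ring T] (ρ : S →+* T)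
    (c : S) (a : S) (ha : a ∈ radContraction ρ) : c * a ∈ radContraction ρ := by
  intro J hJ
  rw [map_mul]
  exact J.mul_mem_left _ (ha J hJ)

end AnyRing

section Base

variable {R : Type u} [CommRing R]

/-- `M` is `p`-local: every `s ∉ p` acts bijectively on `M`
(equivalently, `M → M_p` is an isomorphism). -/
def PLocal (p : Ideal R) (M : Type u) [AddCommGroup M] [Module R M] : Prop :=
  ∀ s ∉ p, Function.Bijective fun x : M => s • x

/-- `M` is `a`-torsion. -/
def PTorsion (a : Ideal R) (M : Type u) [AddCommGroup M] [Module R M] : Prop :=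
  ∀ x : M, ∃ n : ℕ, ∀ r ∈ a ^ n, r • x = 0

/-- `f : M → N` exhibits `N` as the localization of `M` at the prime `p`. -/
def IsLocalizationHom (p : Ideal R) {M N : Type u} [AddCommGroup M] [Module R M]
    [AddCommGroup N] [Module R N] (f : M →ₗ[R] N) : Prop :=
  (∀ s ∉ p, Function.Bijective fun y : N => s • y) ∧
    (∀ y : N, ∃ (x : M) (s : R), s ∉ p ∧ s • y = f x) ∧
    ∀ x : M, f x = 0 → ∃ s ∉ p, s • x = 0

/-- The map induced by `f` on quotients modulo `a ^ n`. -/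
noncomputable def quotPowMap (a : Ideal R) (n : ℕ) {M N : Type u} [AddCommGroup M] [Module R M]
    [AddCommGroup N] [Module R N] (f : M →ₗ[R] N) :
    (M ⧸ (a ^ n • ⊤ : Submodule R M)) →ₗ[R] N ⧸ (a ^ n • ⊤ : Submodule R N) :=
  Submodule.mapQ _ _ f <| by
    rw [← Submodule.map_le_iff_le_comap, Submodule.map_smul'']
    exact Submodule.smul_mono le_rfl le_top

/-- `f : M → N` exhibits `N` as the `a`-adic completion of `M`:
`N` is `a`-adically complete and `f` induces isomorphisms modulo all powers of `a`. -/
def IsAdicCompletionHom (a : Ideal R) {M N : Type u} [AddCommGroup M] [Module R M]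
    [AddCommGroup N] [Module R N] (f : M →ₗ[R] N) : Prop :=
  IsAdicComplete a N ∧ ∀ n : ℕ, Function.Bijective (quotPowMap a n f)

/-- A simple `p`-localized module: a right module over `T` (with central `R`-action) that
is `p`-local, annihilated by `P`, and simple over the localization `T_p` (expressed via
submodules closed under division by elements outside `p`). -/
def LocSimple {T : Type u} [Ring T] [Algebra R T] (p : Ideal R) (P : Set T)
    (S : Type u) [AddCommGroup S] [Module R S] [Module T S] [IsScalarTower R T S] : Prop :=
  Nontrivial S ∧ PLocal p S ∧ (∀ a ∈ P, ∀ x : S, a • x = 0) ∧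
    ∀ N : Submodule T S, (∀ s ∉ p, ∀ x : S, s • x ∈ N → x ∈ N) → N = ⊥ ∨ N = ⊤

/-- `M` is, in a `p`-local sense, a semisimple module over the localization at `p`:
it is `p`-local and the lattice of localized submodules is complemented. -/
def SemisimpleLoc {T : Type u} [Ring T] [Algebra R T] (p : Ideal R)
    (M : Type u) [AddCommGroup M] [Module R M] [Module T M] [IsScalarTower R T M] : Prop :=
  PLocal p M ∧
    ∀ N : Submodule T M, (∀ s ∉ p, ∀ x : M, s • x ∈ N → x ∈ N) →
      ∃ N' : Submodule T M, (∀ s ∉ p, ∀ x : M, s • x ∈ N' → x ∈ N') ∧ IsCompl N N'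

end Base

section SmulTop

variable {R A : Type u} [CommRing R] [Ring A] [Algebra R A]

/-- The image `a • M` of an ideal of `R` in a right `A`-module, as an `Aᵐᵒᵖ`-submodule. -/
def idealSMulSub (a : Ideal R) (M : Type u) [AddCommGroup M] [Module R M] [Module Aᵐᵒᵖ M]
    [IsScalarTower R Aᵐᵒᵖ M] : Submodule Aᵐᵒᵖ M where
  carrier := (a • (⊤ : Submodule R M) : Submodule R M)
  add_mem' := fun hx hy => Submodule.add_mem _ hx hy
  zero_mem' := Submodule.zero_mem _
  smul_mem' := fun c x hx => by
    refine Submodule.smul_induction_on hx (fun r hr y _ => ?_) (fun u v hu hv => ?_)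
    · rw [smul_comm]
      exact Submodule.smul_mem_smul hr Submodule.mem_top
    · rw [smul_add]
      exact Submodule.add_mem _ hu hv

end SmulTop

section HomModules

variable {S₀ T : Type u} [CommRing S₀] [Ring T]
variable {M E : Type u} [AddCommGroup M] [Module S₀ M] [AddCommGroup E] [Module S₀ E]

/-- If `M` is a left `T`-module then `Hom_{S₀}(M, E)` is a right `T`-module. -/
instance homRightSMul [Module T M] [SMulCommClass T S₀ M] : SMul Tᵐᵒᵖ (M →ₗ[S₀] E) :=
  ⟨fun a f => f ∘ₗ DistribMulAction.toLinearMap S₀ M a.unop⟩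

theorem homRight_smul_apply [Module T M] [SMulCommClass T S₀ M] (a : Tᵐᵒᵖ)
    (f : M →ₗ[S₀] E) (x : M) : (a • f) x = f (a.unop • x) := rfl

instance homRightModule [Module T M] [SMulCommClass T S₀ M] : Module Tᵐᵒᵖ (M →ₗ[S₀] E) where
  one_smul f := LinearMap.ext fun x => by rw [homRight_smul_apply, unop_one, one_smul]
  mul_smul a b f := LinearMap.ext fun x => by
    rw [homRight_smul_apply, homRight_smul_apply, homRight_smul_apply, unop_mul, mul_smul]
  smul_zero a := LinearMap.ext fun x => rfl
  smul_add a f g := LinearMap.ext fun x => rfl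
  add_smul a b f := LinearMap.ext fun x => by
    rw [homRight_smul_apply, unop_add, add_smul, map_add]; rfl
  zero_smul f := LinearMap.ext fun x => by
    rw [homRight_smul_apply, unop_zero, zero_smul, map_zero]; rfl

instance homRightTower [Module T M] [SMulCommClass T S₀ M] [Algebra S₀ T]
    [IsScalarTower S₀ T M] : IsScalarTower S₀ Tᵐᵒᵖ (M →ₗ[S₀] E) := by
  constructor
  intro r a f
  refine LinearMap.ext fun x => ?_
  rw [LinearMap.smul_apply, homRight_smul_apply, homRight_smul_apply, unop_smul,
    smul_assoc, map_smul]

/-- If `M` is a right `T`-module then `Hom_{S₀}(M, E)` is a left `T`-module. -/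
instance homLeftSMul [Module Tᵐᵒᵖ M] [SMulCommClass Tᵐᵒᵖ S₀ M] : SMul T (M →ₗ[S₀] E) :=
  ⟨fun a f => f ∘ₗ DistribMulAction.toLinearMap S₀ M (op a)⟩

theorem homLeft_smul_apply [Module Tᵐᵒᵖ M] [SMulCommClass Tᵐᵒᵖ S₀ M] (a : T)
    (f : M →ₗ[S₀] E) (x : M) : (a • f) x = f (op a • x) := rfl

instance homLeftModule [Module Tᵐᵒᵖ M] [SMulCommClass Tᵐᵒᵖ S₀ M] : Module T (M →ₗ[S₀] E) where
  one_smul f := LinearMap.ext fun x => by rw [homLeft_smul_apply, op_one, one_smul]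
  mul_smul a b f := LinearMap.ext fun x => by
    rw [homLeft_smul_apply, homLeft_smul_apply, homLeft_smul_apply, op_mul, mul_smul]
  smul_zero a := LinearMap.ext fun x => rfl
  smul_add a f g := LinearMap.ext fun x => rfl
  add_smul a b f := LinearMap.ext fun x => by
    rw [homLeft_smul_apply, op_add, add_smul, map_add]; rfl
  zero_smul f := LinearMap.ext fun x => by
    rw [homLeft_smul_apply, op_zero, zero_smul, map_zero]; rfl

instance homLeftTower [Module Tᵐᵒᵖ M] [SMulCommClass Tᵐᵒᵖ S₀ M] [Algebra S₀ T]
    [IsScalarTower S₀ Tᵐᵒᵖ M] : IsScalarTower S₀ T (M →ₗ[S₀] E) := by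
  constructor
  intro r a f
  refine LinearMap.ext fun x => ?_
  rw [LinearMap.smul_apply, homLeft_smul_apply, homLeft_smul_apply, op_smul,
    smul_assoc, map_smul]

end HomModules

section Bundled

/-- A bundled right `A`-module with compatible central `R`-action. -/
structure RightModule (R A : Type u) [CommRing R] [Ring A] [Algebra R A] :
    Type (u + 1) where
  carrier : Type u
  [addCommGroup : AddCommGroup carrier]
  [modA : Module Aᵐᵒᵖ carrier]
  [modR : Module R carrier]
  [tower : IsScalarTower R Aᵐᵒᵖ carrier]

attribute [instance] RightModule.addCommGroup RightModule.modA RightModule.modR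
  RightModule.tower

instance (R A : Type u) [CommRing R] [Ring A] [Algebra R A] :
    CoeSort (RightModule R A) (Type u) :=
  ⟨RightModule.carrier⟩

/-- A bundled left `A`-module with compatible central `R`-action. -/
structure LeftModule (R A : Type u) [CommRing R] [Ring A] [Algebra R A] :
    Type (u + 1) where
  carrier : Type u
  [addCommGroup : AddCommGroup carrier]
  [modA : Module A carrier]
  [modR : Module R carrier]
  [tower : IsScalarTower R A carrier]

attribute [instance] LeftModule.addCommGroup LeftModule.modA LeftModule.modR
  LeftModule.tower

instance (R A : Type u) [CommRing R] [Ring A] [Algebra R A] :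
    CoeSort (LeftModule R A) (Type u) :=
  ⟨LeftModule.carrier⟩

end Bundled

/-! ### Auxiliary machinery for STATEMENT 12 -/

section AuxIdSMul
variable {S : Type u} [Ring S]

/-- The submodule spanned by `T • N`. -/
def idSMul (T : Ideal S) {M : Type u} [AddCommGroup M] [Module S M] (N : Submodule S M) :
    Submodule S M :=
  Submodule.span S {x | ∃ j ∈ T, ∃ m ∈ N, x = j • m}

variable {M : Type u} [AddCommGroup M] [Module S M] {T T₂ : Ideal S} {N : Submodule S M}

theorem smul_mem_idSMul {j : S} (hj : j ∈ T) {m : M} (hm : m ∈ N) : j • m ∈ idSMul T N :=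
  Submodule.subset_span ⟨j, hj, m, hm, rfl⟩

theorem idSMul_le : idSMul T N ≤ N :=
  Submodule.span_le.2 (by rintro x ⟨j, _, m, hm, rfl⟩; exact N.smul_mem j hm)

theorem idSMul_mono {N' : Submodule S M} (h : N ≤ N') : idSMul T N ≤ idSMul T N' :=
  Submodule.span_mono (by rintro x ⟨j, hj, m, hm, rfl⟩; exact ⟨j, hj, m, h hm, rfl⟩)

theorem idSMul_eq_bot (h : ∀ j ∈ T, ∀ m ∈ N, j • m = (0 : M)) : idSMul T N = ⊥ := by
  rw [eq_bot_iff, idSMul, Submodule.span_le]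
  rintro x ⟨j, hj, m, hm, rfl⟩
  simp [h j hj m hm]

theorem exists_rep_of_mem_idSMul {x : M} (hx : x ∈ idSMul T N) :
    ∃ (n : ℕ) (j : Fin n → S) (m : Fin n → M), (∀ i, j i ∈ T) ∧ (∀ i, m i ∈ N) ∧
      x = ∑ i, j i • m i := by
  refine Submodule.span_induction ?_ ?_ ?_ ?_ hx
  · rintro x ⟨j, hj, m, hm, rfl⟩
    exact ⟨1, fun _ => j, fun _ => m, fun _ => hj, fun _ => hm, by simp⟩
  · exact ⟨0, ![], ![], by simp, by simp, by simp⟩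
  · rintro x y - - ⟨n₁, j₁, m₁, hj₁, hm₁, rfl⟩ ⟨n₂, j₂, m₂, hj₂, hm₂, rfl⟩
    refine ⟨n₁ + n₂, Fin.append j₁ j₂, Fin.append m₁ m₂, ?_, ?_, ?_⟩
    · intro i; induction i using Fin.addCases with
      | left i => simpa using hj₁ i
      | right i => simpa using hj₂ i
    · intro i; induction i using Fin.addCases with
      | left i => simpa using hm₁ i
      | right i => simpa using hm₂ i
    · rw [Fin.sum_univ_add]; simp
  · rintro s x - ⟨n, j, m, hj, hm, rfl⟩
    exact ⟨n, fun i => s * j i, m, fun i => T.mul_mem_left s (hj i), hm,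
      by rw [Finset.smul_sum]; simp [mul_smul]⟩

theorem idSMul_idSMul_le : idSMul T (idSMul T₂ N) ≤ idSMul (idSMul T T₂) N := by
  refine Submodule.span_le.2 ?_
  rintro x ⟨j, hj, m, hm, rfl⟩
  obtain ⟨n, t, mm, ht, hmm, rfl⟩ := exists_rep_of_mem_idSMul hm
  rw [Finset.smul_sum]
  refine Submodule.sum_mem _ fun i _ => ?_
  rw [smul_smul]
  have h1 : j * t i ∈ idSMul T T₂ := smul_mem_idSMul hj (ht i)
  exact smul_mem_idSMul h1 (hmm i)

theorem modflat_congr {M' : Type u} [AddCommGroup M'] [Module S M'] (e : M ≃ₗ[S] M')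
    (h : ModFlat S M) : ModFlat S M' := by
  intro n a x hx
  obtain ⟨m, b, y, h1, h2⟩ := h n a (fun i => e.symm (x i)) (by
    apply e.injective
    rw [map_sum, map_zero]
    simp only [map_smul, e.apply_symm_apply]
    exact hx)
  refine ⟨m, b, fun j => e (y j), fun i => ?_, h2⟩
  have := congrArg e (h1 i)
  simpa using this

/-- purity of submodules with flat quotient -/
theorem mem_idSMul_of_flat_quotient (N : Submodule S M) (hq : ModFlat S (M ⧸ N)) (T : Ideal S)
    {x : M} (hxN : x ∈ N) (hx : x ∈ idSMul T (⊤ : Submodule S M)) : x ∈ idSMul T N := by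
  obtain ⟨n, j, m, hj, -, rfl⟩ := exists_rep_of_mem_idSMul hx
  obtain ⟨k, b, y, h1, h2⟩ := hq n j (fun i => N.mkQ (m i)) (by
    have h0 : N.mkQ (∑ i, j i • m i) = 0 := by
      rw [Submodule.mkQ_apply, Submodule.Quotient.mk_eq_zero]; exact hxN
    rw [map_sum] at h0
    simpa only [map_smul] using h0)
  choose y' hy' using fun i => Submodule.Quotient.mk_surjective N (y i)
  set nn : Fin n → M := fun i => m i - ∑ t, b i t • y' t with hnn
  have hmemN : ∀ i, nn i ∈ N := by
    intro i
    rw [← Submodule.Quotient.mk_eq_zero]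
    have hmk : N.mkQ (m i) = ∑ t, b i t • N.mkQ (y' t) := by
      rw [h1 i]
      refine Finset.sum_congr rfl fun t _ => ?_
      rw [Submodule.mkQ_apply, hy']
    have : N.mkQ (nn i) = 0 := by
      simp only [hnn, map_sub, map_sum, map_smul, hmk]
      abel
    simpa using this
  have key : ∑ i, j i • nn i = ∑ i, j i • m i := by
    simp only [hnn, smul_sub, Finset.sum_sub_distrib]
    have hsw : ∑ i, j i • ∑ t, b i t • y' t = ∑ t, (∑ i, j i * b i t) • y' t := by
      calc ∑ i, j i • ∑ t, b i t • y' t = ∑ i, ∑ t, (j i * b i t) • y' t := by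
            refine Finset.sum_congr rfl fun i _ => ?_
            rw [Finset.smul_sum]
            exact Finset.sum_congr rfl fun t _ => (mul_smul _ _ _).symm
        _ = ∑ t, ∑ i, (j i * b i t) • y' t := Finset.sum_comm
        _ = ∑ t, (∑ i, j i * b i t) • y' t := by
            exact Finset.sum_congr rfl fun t _ => (Finset.sum_smul).symm
    rw [hsw]
    simp only [h2, zero_smul, Finset.sum_const_zero, sub_zero]
  rw [← key]
  exact Submodule.sum_mem _ fun i _ => smul_mem_idSMul (hj i) (hmemN i)

/-- Modules killed by a finite intersection of maximal left ideals are semisimple. -/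
theorem isSemisimpleModule_of_killed (t : Finset (Ideal S)) (ht : ∀ m ∈ t, IsCoatom m)
    (M : Type u) [AddCommGroup M] [Module S M]
    (hM : ∀ j ∈ t.inf id, ∀ x : M, j • x = 0) : IsSemisimpleModule S M := by
  classical
  -- the quotient by the radical is semisimple
  have hssq : IsSemisimpleModule S (S ⧸ (t.inf id : Ideal S)) := by
    set J : Ideal S := t.inf id with hJ
    let PiM : Type u := ∀ i : {x // x ∈ t}, S ⧸ (i.1 : Ideal S)
    haveI hPi : IsSemisimpleModule S PiM := by
      refine isSemisimpleModule_of_isSemisimpleModule_submodule'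
        (p := fun i : {x // x ∈ t} =>
          LinearMap.range (LinearMap.single S (fun i : {x // x ∈ t} => S ⧸ (i.1 : Ideal S)) i))
        (fun i => ?_) (LinearMap.iSup_range_single S _)
      have hsimple : IsSimpleModule S (S ⧸ (i.1 : Ideal S)) :=
        isSimpleModule_iff_isCoatom.2 (ht i.1 i.2)
      have hinj : Function.Injective
          (LinearMap.single S (fun i : {x // x ∈ t} => S ⧸ (i.1 : Ideal S)) i) := by
        rw [← LinearMap.ker_eq_bot]
        exact LinearMap.ker_single S _ i
      exact IsSemisimpleModule.congr (LinearEquiv.ofInjective _ hinj).symm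
    -- embed S/J into Pi
    have hker : (J : Ideal S) ≤ LinearMap.ker
        (LinearMap.pi fun i : {x // x ∈ t} => Submodule.mkQ (i.1 : Ideal S)) := by
      intro x hxJ
      simp only [LinearMap.mem_ker, LinearMap.pi_apply]
      funext i
      have : Submodule.mkQ (i.1 : Ideal S) x = 0 := by
        rw [Submodule.mkQ_apply, Submodule.Quotient.mk_eq_zero]
        exact (Finset.inf_le i.2 : J ≤ id i.1) hxJ
      simpa using this
    have hfinj : Function.Injective (Submodule.liftQ (J : Ideal S)
        (LinearMap.pi fun i : {x // x ∈ t} => Submodule.mkQ (i.1 : Ideal S)) hker) := by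
      rw [← LinearMap.ker_eq_bot, eq_bot_iff]
      intro z hz
      obtain ⟨x, rfl⟩ := Submodule.Quotient.mk_surjective _ z
      rw [LinearMap.mem_ker, Submodule.liftQ_apply] at hz
      have hall : ∀ i : {x // x ∈ t}, x ∈ (i.1 : Ideal S) := by
        intro i
        have h0 := congrFun hz i
        simp only [LinearMap.pi_apply, Submodule.mkQ_apply, Pi.zero_apply,
          Submodule.Quotient.mk_eq_zero] at h0
        exact h0
      have hxJ : x ∈ J := by
        rw [hJ, Submodule.mem_finsetInf]
        exact fun i hi => hall ⟨i, hi⟩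
      simpa [Submodule.Quotient.mk_eq_zero] using hxJ
    haveI hr : IsSemisimpleModule S ↥(LinearMap.range (Submodule.liftQ (J : Ideal S)
        (LinearMap.pi fun i : {x // x ∈ t} => Submodule.mkQ (i.1 : Ideal S)) hker)) :=
      inferInstance
    exact IsSemisimpleModule.congr
      (M := ↥(LinearMap.range (Submodule.liftQ (J : Ideal S)
        (LinearMap.pi fun i : {x // x ∈ t} => Submodule.mkQ (i.1 : Ideal S)) hker)))
      (LinearEquiv.ofInjective (Submodule.liftQ (J : Ideal S)
        (LinearMap.pi fun i : {x // x ∈ t} => Submodule.mkQ (i.1 : Ideal S)) hker) hfinj)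
  -- now every cyclic submodule of M is a quotient of S/J
  set J : Ideal S := t.inf id with hJ
  refine isSemisimpleModule_of_isSemisimpleModule_submodule'
    (p := fun x : M => Submodule.span S {x}) (fun x => ?_) ?_
  · haveI := hssq
    have hker : J ≤ LinearMap.ker (LinearMap.toSpanSingleton S M x) := fun j hj => by
      simp only [LinearMap.mem_ker, LinearMap.toSpanSingleton_apply]
      exact hM j hj x
    let g : (S ⧸ (J : Ideal S)) →ₗ[S] M := Submodule.liftQ _ _ hker
    have hrange : LinearMap.range g = Submodule.span S {x} := by
      rw [Submodule.range_liftQ]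
      exact (LinearMap.span_singleton_eq_range S M x).symm
    have : IsSemisimpleModule S ↥(LinearMap.range g) := IsSemisimpleModule.range g
    rw [hrange] at this
    exact this
  · rw [eq_top_iff]
    intro x _
    exact Submodule.mem_iSup_of_mem x (Submodule.mem_span_singleton_self x)

end AuxIdSMul

section AuxStep
variable {S : Type u} [Ring S]

/-- Key lifting step: a map from a flat module lifts across a surjection whose kernel is
killed by an ideal `J` such that `J`-killed modules are semisimple. -/
theorem exists_lift_of_flat (J : Ideal S)
    (hJss : ∀ (M : Type u) [AddCommGroup M] [Module S M],
      (∀ j ∈ J, ∀ x : M, j • x = 0) → IsSemisimpleModule S M)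
    {G X Y : Type u} [AddCommGroup G] [Module S G] [AddCommGroup X] [Module S X]
    [AddCommGroup Y] [Module S Y]
    (hG : ModFlat S G) (q : X →ₗ[S] Y) (hq : Function.Surjective q)
    (hker : ∀ x ∈ LinearMap.ker q, ∀ j ∈ J, j • x = 0)
    (g : G →ₗ[S] Y) : ∃ h : G →ₗ[S] X, q ∘ₗ h = g := by
  classical
  set P : Submodule S (G × X) :=
    LinearMap.ker (g ∘ₗ LinearMap.fst S G X - q ∘ₗ LinearMap.snd S G X) with hP
  set π₁ : ↥P →ₗ[S] G := (LinearMap.fst S G X) ∘ₗ P.subtype with hπ₁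
  set π₂ : ↥P →ₗ[S] X := (LinearMap.snd S G X) ∘ₗ P.subtype with hπ₂
  have hmemP : ∀ z : G × X, z ∈ P ↔ g z.1 = q z.2 := by
    intro z
    rw [hP, LinearMap.mem_ker]
    simp only [LinearMap.sub_apply, LinearMap.comp_apply, LinearMap.fst_apply,
      LinearMap.snd_apply]
    rw [sub_eq_zero]
  have hπ₁surj : Function.Surjective π₁ := by
    intro x
    obtain ⟨w, hw⟩ := hq (g x)
    exact ⟨⟨(x, w), (hmemP _).2 hw.symm⟩, rfl⟩
  set K : Submodule S ↥P := LinearMap.ker π₁ with hK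
  have hKkill : ∀ z ∈ K, ∀ j ∈ J, j • z = (0 : ↥P) := by
    intro z hz j hj
    have h1 : (z : G × X).1 = 0 := hz
    have h2 : (z : G × X).2 ∈ LinearMap.ker q := by
      rw [LinearMap.mem_ker]
      have := (hmemP (z : G × X)).1 z.2
      rw [← this, h1, map_zero]
    apply Subtype.ext
    show j • (z : G × X) = 0
    apply Prod.ext
    · show j • (z : G × X).1 = 0
      rw [h1, smul_zero]
    · show j • (z : G × X).2 = 0
      exact hker _ h2 j hj
  have hKbot : K ⊓ idSMul J (⊤ : Submodule S ↥P) = ⊥ := by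
    rw [eq_bot_iff]
    rintro z ⟨hzK, hzJ⟩
    have hflatQ : ModFlat S (↥P ⧸ K) :=
      modflat_congr (LinearMap.quotKerEquivOfSurjective π₁ hπ₁surj).symm hG
    have hmem := mem_idSMul_of_flat_quotient K hflatQ J hzK hzJ
    rw [idSMul_eq_bot (fun j hj m hm => hKkill m hm j hj)] at hmem
    exact hmem
  set PJ : Submodule S ↥P := idSMul J (⊤ : Submodule S ↥P) with hPJ
  haveI hsemi : IsSemisimpleModule S (↥P ⧸ PJ) := hJss _ (by
    intro j hj x
    obtain ⟨z, rfl⟩ := Submodule.Quotient.mk_surjective PJ x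
    rw [← Submodule.Quotient.mk_smul, Submodule.Quotient.mk_eq_zero]
    exact smul_mem_idSMul hj Submodule.mem_top)
  set Kbar : Submodule S (↥P ⧸ PJ) := Submodule.map PJ.mkQ K with hKbar
  obtain ⟨C, hC⟩ := exists_isCompl Kbar
  set pr : (↥P ⧸ PJ) →ₗ[S] ↥Kbar := Kbar.linearProjOfIsCompl C hC with hpr
  set φ : ↥K →ₗ[S] (↥P ⧸ PJ) := PJ.mkQ ∘ₗ K.subtype with hφ
  have hφinj : Function.Injective φ := by
    refine (injective_iff_map_eq_zero _).2 fun z hz => ?_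
    have h1 : PJ.mkQ (K.subtype z) = 0 := hz
    have h2 : (z : ↥P) ∈ PJ := by
      rwa [Submodule.mkQ_apply, Submodule.Quotient.mk_eq_zero] at h1
    have h3 : (z : ↥P) ∈ K ⊓ PJ := ⟨z.2, h2⟩
    rw [hKbot] at h3
    exact Subtype.ext h3
  
  have hφrange : LinearMap.range φ = Kbar := by
    rw [hφ, LinearMap.range_comp, Submodule.range_subtype, hKbar]
  set eK : ↥K ≃ₗ[S] ↥Kbar :=
    (LinearEquiv.ofInjective φ hφinj).trans (LinearEquiv.ofEq _ _ hφrange) with heK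
  set r : ↥P →ₗ[S] ↥K := eK.symm.toLinearMap ∘ₗ pr ∘ₗ PJ.mkQ with hr
  have hrK : ∀ z : ↥K, r (K.subtype z) = z := by
    intro z
    have hcoe : ((eK z : ↥Kbar) : ↥P ⧸ PJ) = PJ.mkQ (K.subtype z) := rfl
    have h2 : pr (((eK z) : ↥Kbar) : ↥P ⧸ PJ) = eK z :=
      Submodule.linearProjOfIsCompl_apply_left hC (eK z)
    have h3 : r (K.subtype z) = eK.symm (pr (PJ.mkQ (K.subtype z))) := rfl
    rw [h3, ← hcoe, h2, LinearEquiv.symm_apply_apply]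
  set r' : ↥P →ₗ[S] ↥P := K.subtype ∘ₗ r with hr'
  set N' : Submodule S ↥P := LinearMap.ker r' with hN'
  set ψ : ↥N' →ₗ[S] G := π₁ ∘ₗ N'.subtype with hψ
  have hψbij : Function.Bijective ψ := by
    constructor
    · refine (injective_iff_map_eq_zero _).2 fun z hzz => ?_
      have hzK : (N'.subtype z) ∈ K := by
        rw [hK, LinearMap.mem_ker]
        exact hzz
      have h1 : r' (N'.subtype z) = N'.subtype z := by
        have heq := hrK ⟨N'.subtype z, hzK⟩
        have h2 : r' (N'.subtype z) = K.subtype (r (K.subtype ⟨N'.subtype z, hzK⟩)) := rfl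
        rw [h2, heq]
        rfl
      have h0 : r' (N'.subtype z) = 0 := z.2
      have hz0 : N'.subtype z = 0 := by rw [← h1, h0]
      exact Subtype.ext hz0
    · intro x
      obtain ⟨w, hw⟩ := hπ₁surj x
      have hfix : r' (r' w) = r' w := by
        have : r (K.subtype (r w)) = r w := hrK (r w)
        show K.subtype (r (K.subtype (r w))) = K.subtype (r w)
        rw [this]
      refine ⟨⟨w - r' w, ?_⟩, ?_⟩
      · rw [hN', LinearMap.mem_ker, map_sub, hfix, sub_self]
      · show π₁ (w - r' w) = x
        have hπK : π₁ (r' w) = 0 := (r w).2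
        rw [map_sub, hw, hπK, sub_zero]
  set e : ↥N' ≃ₗ[S] G := LinearEquiv.ofBijective ψ hψbij with he
  refine ⟨(π₂ ∘ₗ N'.subtype) ∘ₗ e.symm.toLinearMap, ?_⟩
  ext x
  simp only [LinearMap.comp_apply, LinearEquiv.coe_coe]
  set w : ↥P := N'.subtype (e.symm x) with hw
  have h1 : g ((w : G × X).1) = q ((w : G × X).2) := (hmemP _).1 w.2
  have h2 : (w : G × X).1 = x := by
    have h3 : ψ (e.symm x) = x := e.apply_symm_apply x
    exact h3
  show q ((w : G × X).2) = g x
  rw [← h1, h2]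

end AuxStep

section AuxCentral
variable {R S : Type u} [CommRing R] [Ring S] [Algebra R S]
variable {M : Type u} [AddCommGroup M] [Module S M] [Module R M] [IsScalarTower R S M]

theorem central_smul_comm (s : S) (r : R) (x : M) : s • r • x = r • s • x := by
  rw [← algebraMap_smul S r x, ← algebraMap_smul S r (s • x), smul_smul, smul_smul,
    Algebra.commutes]

theorem map_central_smul {M' : Type u} [AddCommGroup M'] [Module S M'] [Module R M']
    [IsScalarTower R S M'] (f : M →ₗ[S] M') (r : R) (x : M) : f (r • x) = r • f x := by
  rw [← algebraMap_smul S r x, map_smul, algebraMap_smul]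

theorem smul_mem_ideal_smul_top (I : Ideal R) (s : S) {x : M}
    (hx : x ∈ I • (⊤ : Submodule R M)) : s • x ∈ I • (⊤ : Submodule R M) := by
  refine Submodule.smul_induction_on hx (fun r hr y _ => ?_) (fun u v hu hv => ?_)
  · rw [central_smul_comm]
    exact Submodule.smul_mem_smul hr Submodule.mem_top
  · rw [smul_add]
    exact Submodule.add_mem _ hu hv

theorem restrictScalars_map_algebraMap (a : Ideal R) :
    Submodule.restrictScalars R (Ideal.map (algebraMap R S) a) = a • (⊤ : Submodule R S) := by
  apply le_antisymm
  · intro x hx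
    have hx' : x ∈ Submodule.span S ((algebraMap R S) '' a) := hx
    refine Submodule.span_induction ?_ ?_ ?_ ?_ hx'
    · rintro y ⟨r, hr, rfl⟩
      rw [Algebra.algebraMap_eq_smul_one]
      exact Submodule.smul_mem_smul hr Submodule.mem_top
    · exact Submodule.zero_mem _
    · intro y z _ _ hy hz
      exact Submodule.add_mem _ hy hz
    · intro s y _ hy
      exact smul_mem_ideal_smul_top a s hy
  · intro x hx
    refine Submodule.smul_induction_on hx (fun r hr s _ => ?_) (fun u v hu hv => ?_)
    · show r • s ∈ Ideal.map (algebraMap R S) a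
      rw [Algebra.smul_def, Algebra.commutes]
      have h1 : algebraMap R S r ∈ Ideal.map (algebraMap R S) a :=
        Ideal.mem_map_of_mem _ hr
      have := (Ideal.map (algebraMap R S) a).smul_mem s h1
      rwa [smul_eq_mul] at this
    · exact Submodule.add_mem _ hu hv

theorem map_algebraMap_mul_mem {a : Ideal R} {u : S}
    (hu : u ∈ Ideal.map (algebraMap R S) a) (v : S) :
    u * v ∈ Ideal.map (algebraMap R S) a := by
  have hu' : u ∈ Submodule.span S ((algebraMap R S) '' a) := hu
  refine Submodule.span_induction (p := fun u _ => u * v ∈ Ideal.map (algebraMap R S) a)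
    ?_ ?_ ?_ ?_ hu'
  · rintro y ⟨r, hr, rfl⟩
    rw [Algebra.commutes]
    have h1 : algebraMap R S r ∈ Ideal.map (algebraMap R S) a := Ideal.mem_map_of_mem _ hr
    have := (Ideal.map (algebraMap R S) a).smul_mem v h1
    rwa [smul_eq_mul] at this
  · show (0 : S) * v ∈ Ideal.map (algebraMap R S) a
    rw [zero_mul]; exact Submodule.zero_mem _
  · intro y z _ _ hy hz
    rw [add_mul]; exact Submodule.add_mem _ hy hz
  · intro s y _ hy
    have : (s • y) * v = s • (y * v) := by rw [smul_eq_mul, smul_eq_mul, mul_assoc]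
    rw [this]
    exact Submodule.smul_mem _ s hy

end AuxCentral

section AuxArtinian
variable {R S : Type u} [CommRing R] [Ring S] [Algebra R S]

theorem exists_min_above [Module.Finite R S] (a : Ideal R) (hart : IsArtinianRing (R ⧸ a))
    (Φ : Set (Ideal S)) (hΦ : ∀ I ∈ Φ, Ideal.map (algebraMap R S) a ≤ I) (hne : Φ.Nonempty) :
    ∃ I ∈ Φ, ∀ I' ∈ Φ, ¬ I' < I := by
  classical
  haveI := hart
  haveI htower : IsScalarTower R (R ⧸ a) (S ⧸ (a • (⊤ : Submodule R S))) :=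
    (Module.isTorsionBySet_quotient_ideal_smul S a).isScalarTower
  haveI : Module.Finite (R ⧸ a) (S ⧸ (a • (⊤ : Submodule R S))) := by
    haveI : Module.Finite R (S ⧸ (a • (⊤ : Submodule R S))) :=
      Module.Finite.of_surjective (a • (⊤ : Submodule R S)).mkQ
        (Submodule.mkQ_surjective _)
    obtain ⟨s, hs⟩ := (Module.Finite.fg_top (R := R)
      (M := S ⧸ (a • (⊤ : Submodule R S)))).imp (fun s h => h)
    refine ⟨⟨s, ?_⟩⟩
    have h4 := Submodule.span_le_restrictScalars R (R ⧸ a) (s : Set (S ⧸ (a • (⊤ : Submodule R S))))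
    rw [hs] at h4
    exact eq_top_iff.2 fun x _ => h4 Submodule.mem_top
  haveI : IsArtinian (R ⧸ a) (S ⧸ (a • (⊤ : Submodule R S))) := isArtinian_of_fg_of_artinian'
  set μ : Ideal S → Submodule R (S ⧸ (a • (⊤ : Submodule R S))) :=
    fun I => Submodule.map (a • (⊤ : Submodule R S)).mkQ (I.restrictScalars R) with hμ
  have hts := Module.isTorsionBySet_quotient_ideal_smul S a
  set ν : Submodule R (S ⧸ (a • (⊤ : Submodule R S))) →
      Submodule (R ⧸ a) (S ⧸ (a • (⊤ : Submodule R S))) := fun N =>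
    { carrier := N
      add_mem' := fun hx hy => N.add_mem hx hy
      zero_mem' := N.zero_mem
      smul_mem' := by
        intro c x hx
        obtain ⟨r, rfl⟩ := Ideal.Quotient.mk_surjective c
        have hsm : (Ideal.Quotient.mk a r) • x = r • x := hts.mk_smul r x
        rw [hsm]
        exact N.smul_mem r hx } with hν
  obtain ⟨y, hy, hmin⟩ := IsArtinian.set_has_minimal ((fun I => ν (μ I)) '' Φ)
    (hne.image _)
  obtain ⟨I₀, hI₀, rfl⟩ := hy
  refine ⟨I₀, hI₀, fun I' hI' hlt => ?_⟩
  have hle : μ I' ≤ μ I₀ :=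
    Submodule.map_mono (fun x hx => hlt.le hx)
  have hne' : μ I' ≠ μ I₀ := by
    intro heq
    have h1 : ∀ I : Ideal S, Ideal.map (algebraMap R S) a ≤ I →
        Submodule.comap (a • (⊤ : Submodule R S)).mkQ (μ I) = I.restrictScalars R := by
      intro I hI
      rw [hμ, Submodule.comap_map_mkQ]
      refine sup_eq_right.2 ?_
      rw [← restrictScalars_map_algebraMap]
      exact fun x hx => hI hx
    have h2 := h1 I' (hΦ I' hI')
    have h3 := h1 I₀ (hΦ I₀ hI₀)
    rw [heq, h3] at h2
    exact (lt_irrefl I') (by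
      have : I' = I₀ := Submodule.restrictScalars_injective R _ _ h2.symm
      rw [this] at hlt ⊢
      exact hlt)
  have : ν (μ I') < ν (μ I₀) := by
    refine lt_of_le_of_ne (fun x hx => hle hx) ?_
    intro heq
    apply hne'
    exact SetLike.ext' (congrArg (fun (N : Submodule (R ⧸ a) (S ⧸ (a • (⊤ : Submodule R S)))) =>
      (N : Set (S ⧸ (a • (⊤ : Submodule R S))))) heq)
  exact hmin _ ⟨I', hI', rfl⟩ this

end AuxArtinian

section AuxJacobson
variable {R S : Type u} [CommRing R] [Ring S] [Algebra R S]

theorem jacobson_finite_inf [Module.Finite R S] (a : Ideal R) (hart : IsArtinianRing (R ⧸ a))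
    (h : Ideal.map (algebraMap R S) a ≠ ⊤) :
    ∃ t : Finset (Ideal S), (∀ m ∈ t, IsCoatom m ∧ Ideal.map (algebraMap R S) a ≤ m) ∧
      Ideal.jacobson (Ideal.map (algebraMap R S) a) = t.inf id := by
  classical
  set 𝔞 := Ideal.map (algebraMap R S) a with h𝔞
  set Φ : Set (Ideal S) := {I | ∃ t : Finset (Ideal S),
    (∀ m ∈ t, Ideal.IsMaximal m ∧ 𝔞 ≤ m) ∧ I = t.inf id} with hΦ
  have hΦ𝔞 : ∀ I ∈ Φ, 𝔞 ≤ I := by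
    rintro I ⟨t, ht, rfl⟩
    exact Finset.le_inf fun m hm => (ht m hm).2
  have hne : Φ.Nonempty := by
    obtain ⟨m, hmax, hle⟩ := Ideal.exists_le_maximal _ h
    exact ⟨m, {m}, by simp [hmax, hle], by simp⟩
  obtain ⟨I₀, hI₀, hmin⟩ := exists_min_above a hart Φ hΦ𝔞 hne
  obtain ⟨t₀, ht₀, rfl⟩ := hI₀
  have hbelow : ∀ m : Ideal S, Ideal.IsMaximal m → 𝔞 ≤ m → t₀.inf id ≤ m := by
    intro m hmax hle
    have hmem : (insert m t₀).inf id ∈ Φ := ⟨insert m t₀, by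
      intro m' hm'
      rcases Finset.mem_insert.1 hm' with rfl | hm'
      exacts [⟨hmax, hle⟩, ht₀ m' hm'], rfl⟩
    have h1 : (insert m t₀).inf id ≤ t₀.inf id := by
      rw [Finset.inf_insert]
      exact inf_le_right
    have h3 : (insert m t₀).inf id = t₀.inf id :=
      h1.lt_or_eq.resolve_left (hmin _ hmem)
    rw [← h3, Finset.inf_insert]
    exact inf_le_left
  refine ⟨t₀, fun m hm => ⟨Ideal.isMaximal_def.1 (ht₀ m hm).1, (ht₀ m hm).2⟩, ?_⟩
  apply le_antisymm
  · exact Finset.le_inf fun m hm => sInf_le ⟨(ht₀ m hm).2, (ht₀ m hm).1⟩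
  · exact le_sInf fun J hJ => hbelow J hJ.2 hJ.1

theorem jacobson_mul_mem_right {a : Ideal R} {j s : S}
    (hj : j ∈ Ideal.jacobson (Ideal.map (algebraMap R S) a)) :
    j * s ∈ Ideal.jacobson (Ideal.map (algebraMap R S) a) := by
  rw [Ideal.jacobson, Submodule.mem_sInf] at hj ⊢
  intro m hm
  obtain ⟨hle, hmax⟩ := hm
  by_cases hs : s ∈ m
  · have := m.smul_mem j hs
    rwa [smul_eq_mul] at this
  · haveI hsimple : IsSimpleModule S (S ⧸ m) :=
      isSimpleModule_iff_isCoatom.2 (Ideal.isMaximal_def.1 hmax)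
    have hs0 : (Submodule.Quotient.mk s : S ⧸ m) ≠ 0 := by
      rw [Ne, Submodule.Quotient.mk_eq_zero]
      exact hs
    have hker : Ideal.IsMaximal
        (LinearMap.ker (LinearMap.toSpanSingleton S (S ⧸ m) (Submodule.Quotient.mk s))) :=
      IsSimpleModule.ker_toSpanSingleton_isMaximal S hs0
    have h𝔞ker : Ideal.map (algebraMap R S) a ≤
        LinearMap.ker (LinearMap.toSpanSingleton S (S ⧸ m) (Submodule.Quotient.mk s)) := by
      intro u hu
      rw [LinearMap.mem_ker, LinearMap.toSpanSingleton_apply, ← Submodule.Quotient.mk_smul,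
        smul_eq_mul, Submodule.Quotient.mk_eq_zero]
      exact hle (map_algebraMap_mul_mem hu s)
    have hjker := hj _ ⟨h𝔞ker, hker⟩
    rwa [LinearMap.mem_ker, LinearMap.toSpanSingleton_apply, ← Submodule.Quotient.mk_smul,
      smul_eq_mul, Submodule.Quotient.mk_eq_zero] at hjker

end AuxJacobson

section AuxNakayama
variable {S : Type u} [Ring S]

theorem idSMul_sup_le {T : Ideal S} {M : Type u} [AddCommGroup M] [Module S M]
    {N N' : Submodule S M} : idSMul T (N ⊔ N') ≤ idSMul T N ⊔ idSMul T N' := by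
  refine Submodule.span_le.2 ?_
  rintro x ⟨j, hj, m, hm, rfl⟩
  obtain ⟨u, hu, v, hv, rfl⟩ := Submodule.mem_sup.1 hm
  rw [smul_add]
  exact Submodule.add_mem _ (Submodule.mem_sup_left (smul_mem_idSMul hj hu))
    (Submodule.mem_sup_right (smul_mem_idSMul hj hv))

theorem idSMul_mono_left {T T' : Ideal S} {M : Type u} [AddCommGroup M] [Module S M]
    {N : Submodule S M} (h : T ≤ T') : idSMul T N ≤ idSMul T' N :=
  Submodule.span_mono (by rintro x ⟨j, hj, m, hm, rfl⟩; exact ⟨j, h hj, m, hm, rfl⟩)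

theorem le_idSMul_top {M : Type u} [AddCommGroup M] [Module S M] {N : Submodule S M} :
    N ≤ idSMul (⊤ : Ideal S) N := by
  intro x hx
  have := smul_mem_idSMul (T := (⊤ : Ideal S)) (j := (1 : S)) trivial hx
  rwa [one_smul] at this

theorem exists_of_mem_idSMul_span_singleton {J : Ideal S}
    (hJr : ∀ j ∈ J, ∀ v : S, j * v ∈ J) {y w : S}
    (hw : w ∈ idSMul J (Submodule.span S {y})) : ∃ c ∈ J, w = c * y := by
  obtain ⟨n, j, m, hj, hm, rfl⟩ := exists_rep_of_mem_idSMul hw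
  choose s hs using fun i => Submodule.mem_span_singleton.1 (hm i)
  refine ⟨∑ i, j i * s i, Submodule.sum_mem _ fun i _ => hJr _ (hj i) (s i), ?_⟩
  rw [Finset.sum_mul]
  refine Finset.sum_congr rfl fun i _ => ?_
  rw [← hs i, smul_eq_mul, smul_eq_mul, mul_assoc]

theorem nakayama_list (𝔞 J : Ideal S)
    (h𝔞r : ∀ u ∈ 𝔞, ∀ v : S, u * v ∈ 𝔞)
    (hJr : ∀ j ∈ J, ∀ v : S, j * v ∈ J)
    (hunit : ∀ c ∈ J, ∃ z : S, z * (1 - c) - 1 ∈ 𝔞)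
    (I : Ideal S) (hI : I ≤ idSMul J (I : Submodule S S) ⊔ 𝔞) :
    ∀ L : List S, (∀ y ∈ L, y ∈ I) → I ≤ Submodule.span S {y | y ∈ L} ⊔ 𝔞 → I ≤ 𝔞 := by
  intro L
  induction L with
  | nil =>
    intro _ hgen
    have hb : Submodule.span S {y : S | y ∈ ([] : List S)} = ⊥ := by
      convert Submodule.span_empty (R := S) (M := S) using 2
      simp
    rwa [hb, bot_sup_eq] at hgen
  | cons y L' ih =>
    intro hmem hgen
    have hseteq : {z : S | z ∈ y :: L'} = insert y {z : S | z ∈ L'} := by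
      ext z; simp [List.mem_cons]
    have hgen' : I ≤ Submodule.span S {y} ⊔ Submodule.span S {z : S | z ∈ L'} ⊔ 𝔞 := by
      rwa [hseteq, Submodule.span_insert] at hgen
    -- decompose y
    have hy : y ∈ idSMul J (I : Submodule S S) ⊔ 𝔞 := hI (hmem y List.mem_cons_self)
    obtain ⟨w, hw, v, hv, hwv⟩ := Submodule.mem_sup.1 hy
    have hw2 : w ∈ idSMul J (Submodule.span S {y}) ⊔
        (idSMul J (Submodule.span S {z : S | z ∈ L'}) ⊔ idSMul J 𝔞) := by
      have h1 : idSMul J (I : Submodule S S) ≤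
          idSMul J (Submodule.span S {y} ⊔ Submodule.span S {z : S | z ∈ L'} ⊔ 𝔞) :=
        idSMul_mono hgen'
      have h2 := le_trans h1 (le_trans idSMul_sup_le
        (sup_le_sup idSMul_sup_le le_rfl))
      have h3 := h2 hw
      rwa [sup_assoc] at h3
    obtain ⟨w₁, hw₁, w₂, hw₂, hw12⟩ := Submodule.mem_sup.1 hw2
    obtain ⟨c, hc, rfl⟩ := exists_of_mem_idSMul_span_singleton hJr hw₁
    have hw₂' : w₂ ∈ Submodule.span S {z : S | z ∈ L'} ⊔ 𝔞 := by
      refine (show idSMul J (Submodule.span S {z : S | z ∈ L'}) ⊔ idSMul J 𝔞 ≤ Submodule.span S {z : S | z ∈ L'} ⊔ 𝔞 from sup_le_sup (idSMul_le (T := J)) (idSMul_le (T := J))) ?_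
      exact hw₂
    -- (1 - c) * y ∈ span L' ⊔ 𝔞
    have hkey : (1 - c) * y ∈ Submodule.span S {z : S | z ∈ L'} ⊔ 𝔞 := by
      have h8 : w₂ = w - c * y := by rw [← hw12]; abel
      have h9 : w₂ + v = y - c * y := by
        rw [h8, ← hwv]; abel
      have h10 : (1 - c) * y = w₂ + v := by rw [sub_mul, one_mul, h9]
      rw [h10]
      exact Submodule.add_mem _ hw₂' (Submodule.mem_sup_right hv)
    obtain ⟨z, hz⟩ := hunit c hc
    have hynew : y ∈ Submodule.span S {z : S | z ∈ L'} ⊔ 𝔞 := by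
      have hd : (z * (1 - c) - 1) * y ∈ 𝔞 := h𝔞r _ hz y
      have hy2 : z * ((1 - c) * y) - (z * (1 - c) - 1) * y = y := by
        rw [← mul_assoc, sub_mul, one_mul]
        abel
      rw [← hy2]
      refine Submodule.sub_mem _ ?_ (Submodule.mem_sup_right hd)
      have := Submodule.smul_mem _ z hkey
      rwa [smul_eq_mul] at this
    have hgen2 : I ≤ Submodule.span S {z : S | z ∈ L'} ⊔ 𝔞 := by
      refine le_trans hgen ?_
      rw [hseteq, Submodule.span_insert]
      refine sup_le (sup_le ?_ le_sup_left) le_sup_right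
      rw [Submodule.span_le, Set.singleton_subset_iff]
      exact hynew
    exact ih (fun z hz' => hmem z (List.mem_cons_of_mem y hz')) hgen2

/-- The auxiliary chain of ideals `T 0 = ⊤`, `T (n+1) = J·(T n) + 𝔞`. -/
def Tchain (𝔞 J : Ideal S) : ℕ → Ideal S
  | 0 => ⊤
  | (n+1) => idSMul J ((Tchain 𝔞 J n : Ideal S) : Submodule S S) ⊔ 𝔞

theorem tchain_succ_le (𝔞 J : Ideal S) : ∀ n, Tchain 𝔞 J (n + 1) ≤ Tchain 𝔞 J n
  | 0 => le_top
  | (n+1) => sup_le_sup_right (idSMul_mono (tchain_succ_le 𝔞 J n)) 𝔞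

theorem le_tchain (𝔞 J : Ideal S) : ∀ n, 𝔞 ≤ Tchain 𝔞 J n
  | 0 => le_top
  | (_+1) => le_sup_right

theorem iterate_idSMul_le (𝔞 J : Ideal S) {M : Type u} [AddCommGroup M] [Module S M]
    (C : Submodule S M) : ∀ n, (fun N : Submodule S M => idSMul J N)^[n] C ≤
      idSMul (Tchain 𝔞 J n) C
  | 0 => le_idSMul_top
  | (n+1) => by
    rw [Function.iterate_succ_apply']
    refine le_trans (idSMul_mono (iterate_idSMul_le 𝔞 J C n)) ?_
    refine le_trans idSMul_idSMul_le ?_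
    refine idSMul_mono_left ?_
    exact le_trans le_rfl (le_sup_left : idSMul J ((Tchain 𝔞 J n : Ideal S) : Submodule S S) ≤ _)

end AuxNakayama

section AuxNakayamaApply
variable {R S : Type u} [CommRing R] [Ring S] [Algebra R S]

theorem exists_tchain_le [Module.Finite R S] [IsNoetherianRing R] (a : Ideal R)
    (hart : IsArtinianRing (R ⧸ a)) :
    ∃ N : ℕ, Tchain (Ideal.map (algebraMap R S) a)
      (Ideal.jacobson (Ideal.map (algebraMap R S) a)) N ≤ Ideal.map (algebraMap R S) a := by
  classical
  set 𝔞 := Ideal.map (algebraMap R S) a with h𝔞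
  set J := Ideal.jacobson 𝔞 with hJ
  obtain ⟨I₀, hI₀, hmin⟩ := exists_min_above a hart (Set.range (Tchain 𝔞 J))
    (by rintro I ⟨n, rfl⟩; exact le_tchain 𝔞 J n) ⟨_, ⟨0, rfl⟩⟩
  obtain ⟨N, rfl⟩ := hI₀
  have heq : Tchain 𝔞 J (N + 1) = Tchain 𝔞 J N :=
    (tchain_succ_le 𝔞 J N).lt_or_eq.resolve_left (hmin _ ⟨N + 1, rfl⟩)
  have hIfix : Tchain 𝔞 J N ≤ idSMul J ((Tchain 𝔞 J N : Ideal S) : Submodule S S) ⊔ 𝔞 :=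
    le_of_eq heq.symm
  haveI : IsNoetherian R S := isNoetherian_of_isNoetherianRing_of_finite R S
  obtain ⟨s, hs⟩ := IsNoetherian.noetherian ((Tchain 𝔞 J N).restrictScalars R)
  have hspan : Submodule.span S (s : Set S) = ((Tchain 𝔞 J N : Ideal S) : Submodule S S) := by
    apply le_antisymm
    · rw [Submodule.span_le]
      intro x hx
      have h1 : x ∈ Submodule.span R (s : Set S) := Submodule.subset_span hx
      rw [hs] at h1
      exact h1
    · intro x hx
      have h1 : x ∈ Submodule.span R (s : Set S) := by rw [hs]; exact hx
      exact Submodule.span_le_restrictScalars R S _ h1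
  refine ⟨N, nakayama_list 𝔞 J (fun u hu v => map_algebraMap_mul_mem hu v)
    (fun j hj v => jacobson_mul_mem_right hj)
    (fun c hc => Ideal.exists_mul_sub_mem_of_sub_one_mem_jacobson (1 - c)
      (by simpa using (neg_mem hc : -c ∈ J)))
    (Tchain 𝔞 J N) hIfix s.toList (fun y hy => ?_) ?_⟩
  · have h1 : y ∈ s := by rwa [← Finset.mem_toList]
    have h2 : y ∈ Submodule.span S (s : Set S) := Submodule.subset_span h1
    rwa [hspan] at h2
  · have hseteq : {y : S | y ∈ s.toList} = (s : Set S) := by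
      ext z; simp [Finset.mem_toList]
    rw [hseteq, hspan]
    exact le_sup_left

theorem smul_mem_ideal_smul_restrict {M : Type u} [AddCommGroup M] [Module S M] [Module R M]
    [IsScalarTower R S M] (I : Ideal R) (C : Submodule S M) (s : S) {x : M}
    (hx : x ∈ I • (C.restrictScalars R)) : s • x ∈ I • (C.restrictScalars R) := by
  refine Submodule.smul_induction_on hx (fun r hr y hy => ?_) (fun u v hu hv => ?_)
  · rw [central_smul_comm]
    exact Submodule.smul_mem_smul hr (C.smul_mem s hy)
  · rw [smul_add]
    exact Submodule.add_mem _ hu hv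

theorem idSMul_algebraMap_le {M : Type u} [AddCommGroup M] [Module S M] [Module R M]
    [IsScalarTower R S M] (a : Ideal R) (C : Submodule S M) {x : M}
    (hx : x ∈ idSMul (Ideal.map (algebraMap R S) a) C) :
    x ∈ a • (C.restrictScalars R) := by
  refine Submodule.span_induction ?_ ?_ ?_ ?_ hx
  · rintro y ⟨u, hu, m, hm, rfl⟩
    have hu' : u ∈ Submodule.span S ((algebraMap R S) '' a) := hu
    refine Submodule.span_induction
      (p := fun u _ => ∀ m ∈ C, u • m ∈ a • (C.restrictScalars R)) ?_ ?_ ?_ ?_ hu' m hm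
    · rintro y' ⟨r, hr, rfl⟩ m' hm'
      rw [algebraMap_smul]
      exact Submodule.smul_mem_smul hr hm'
    · intro m' _
      rw [zero_smul]; exact Submodule.zero_mem _
    · intro y1 y2 _ _ h1 h2 m' hm'
      rw [add_smul]; exact Submodule.add_mem _ (h1 m' hm') (h2 m' hm')
    · intro s y1 _ h1 m' hm'
      rw [smul_eq_mul, mul_smul]
      exact smul_mem_ideal_smul_restrict a C s (h1 m' hm')
  · exact Submodule.zero_mem _
  · intro y z _ _ hy hz
    exact Submodule.add_mem _ hy hz
  · intro s y _ hy
    exact smul_mem_ideal_smul_restrict a C s hy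

end AuxNakayamaApply

/-- Let `A` be a Noether `R`-algebra and `a ⊆ R` an ideal with `R/a`
artinian. For every `a`-adically complete flat right `A`-module `F`, the canonical map
`F → F ⊗_R (R/a)` (realized as the quotient map `F → F/aF`) is a flat cover. -/
theorem flat_cover_onto_reduction_mod_artinian_ideal
    {R A : Type u} [CommRing R] [IsNoetherianRing R] [Ring A] [Algebra R A]
    [Module.Finite R A]
    (a : Ideal R) (hart : IsArtinianRing (R ⧸ a))
    (F : Type u) [AddCommGroup F] [Module R F] [Module Aᵐᵒᵖ F] [IsScalarTower R Aᵐᵒᵖ F]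
    (hflat : ModFlat Aᵐᵒᵖ F) (hcomp : IsAdicComplete a F) :
    IsFlatCover (idealSMulSub (A := A) a F).mkQ := by
  classical
  haveI : Module.Finite R Aᵐᵒᵖ :=
    Module.Finite.equiv (MulOpposite.opLinearEquiv R : A ≃ₗ[R] Aᵐᵒᵖ)
  set D0 : Submodule Aᵐᵒᵖ F := idealSMulSub a F with hD0def
  have hD0mem : ∀ x : F, x ∈ D0 ↔ x ∈ (a • (⊤ : Submodule R F) : Submodule R F) :=
    fun x => Iff.rfl
  have hhaus : ∀ v : F, (∀ k : ℕ, v ∈ (a ^ k • (⊤ : Submodule R F) : Submodule R F)) → v = 0 := by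
    intro v hv
    refine hcomp.toIsHausdorff.haus v fun n => ?_
    rw [SModEq.sub_mem, sub_zero]
    exact hv n
  have hprec := hcomp.toIsPrecomplete
  have hpow0 : (a ^ 0 • (⊤ : Submodule R F) : Submodule R F) = ⊤ := by
    rw [pow_zero, Ideal.one_eq_top, Submodule.top_smul]
  have hsm : ∀ k : ℕ, (a ^ (k+1) • (⊤ : Submodule R F) : Submodule R F) =
      a • (a ^ k • (⊤ : Submodule R F)) := by
    intro k
    rw [pow_succ', ← Ideal.smul_eq_mul, Submodule.smul_assoc]
  have hsm2 : ∀ k : ℕ, (a ^ (k+1) • (⊤ : Submodule R F) : Submodule R F) =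
      a ^ k • (a • (⊤ : Submodule R F)) := by
    intro k
    rw [pow_succ, ← Ideal.smul_eq_mul, Submodule.smul_assoc]
  refine ⟨hflat, ?_, ?_⟩
  · -- factorization through the quotient
    intro G _ _ hG g
    by_cases htop : (a • (⊤ : Submodule R F) : Submodule R F) = ⊤
    · -- degenerate case : F is trivial
      have hsub : ∀ x : F, x = 0 := by
        have hpow : ∀ k : ℕ, (a ^ k • (⊤ : Submodule R F) : Submodule R F) = ⊤ := by
          intro k
          induction k with
          | zero => exact hpow0
          | succ k ih => rw [hsm k, ih, htop]
        intro x
        exact hhaus x fun k => by rw [hpow k]; trivial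
      haveI hFq : Subsingleton (F ⧸ D0) := by
        constructor
        intro x y
        obtain ⟨u, rfl⟩ := Submodule.Quotient.mk_surjective _ x
        obtain ⟨v, rfl⟩ := Submodule.Quotient.mk_surjective _ y
        rw [hsub u, hsub v]
      exact ⟨0, by ext x; exact Subsingleton.elim _ _⟩
    · -- main case
      have h𝔞 : Ideal.map (algebraMap R Aᵐᵒᵖ) a ≠ ⊤ := by
        intro h𝔞top
        apply htop
        have h1 : (1 : Aᵐᵒᵖ) ∈ (a • (⊤ : Submodule R Aᵐᵒᵖ) : Submodule R Aᵐᵒᵖ) := by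
          rw [← restrictScalars_map_algebraMap a, h𝔞top]
          trivial
        rw [eq_top_iff]
        intro x _
        set ev : Aᵐᵒᵖ →ₗ[R] F :=
          { toFun := fun s => s • x
            map_add' := fun u v => add_smul u v x
            map_smul' := fun r s => by simp [smul_assoc] } with hev
        have h3 : ev 1 ∈ Submodule.map ev (a • (⊤ : Submodule R Aᵐᵒᵖ)) :=
          Submodule.mem_map_of_mem h1
        rw [Submodule.map_smul''] at h3
        have h4 : ev 1 = x := one_smul _ x
        rw [h4] at h3
        exact Submodule.smul_mono le_rfl le_top h3
      obtain ⟨t, ht, hJt⟩ := jacobson_finite_inf a hart h𝔞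
      set J := Ideal.jacobson (Ideal.map (algebraMap R Aᵐᵒᵖ) a) with hJdef
      have hJss : ∀ (M : Type u) [AddCommGroup M] [Module Aᵐᵒᵖ M],
          (∀ j ∈ J, ∀ x : M, j • x = 0) → IsSemisimpleModule Aᵐᵒᵖ M := by
        intro M _ _ hM
        refine isSemisimpleModule_of_killed t (fun m hm => (ht m hm).1) M (fun j hj => ?_)
        have hj' : j ∈ J := by rw [hJt]; exact hj
        exact hM j hj'
      obtain ⟨NN, hNN⟩ := exists_tchain_le (S := Aᵐᵒᵖ) a hart
      set D : ℕ → Submodule Aᵐᵒᵖ F :=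
        fun n => (fun N : Submodule Aᵐᵒᵖ F => idSMul J N)^[n] D0 with hD
      have hDsucc : ∀ n, D (n+1) = idSMul J (D n) :=
        fun n => Function.iterate_succ_apply' _ n D0
      have hDdec : ∀ n, D (n+1) ≤ D n := fun n => by rw [hDsucc n]; exact idSMul_le
      have hDle : ∀ {m n : ℕ}, m ≤ n → D n ≤ D m := by
        intro m n h
        induction h with
        | refl => exact le_rfl
        | step _ ih => exact le_trans (hDdec _) ih
      have hDb : ∀ (k : ℕ) {x : F}, x ∈ D (NN * k) →
          x ∈ (a ^ k • (⊤ : Submodule R F) : Submodule R F) := by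
        intro k
        induction k with
        | zero => intro x _; rw [hpow0]; trivial
        | succ k ih =>
          intro x hx
          have hidx : NN * (k+1) = NN + NN * k := by ring
          have hit : D (NN * (k+1)) = (fun N : Submodule Aᵐᵒᵖ F => idSMul J N)^[NN] (D (NN * k)) := by
            rw [hD, hidx]
            exact Function.iterate_add_apply _ NN (NN * k) D0
          have h1 : x ∈ idSMul (Ideal.map (algebraMap R Aᵐᵒᵖ) a) (D (NN * k)) := by
            have h2 := (iterate_idSMul_le (Ideal.map (algebraMap R Aᵐᵒᵖ) a) J (D (NN * k)) NN)
            have h3 : x ∈ (fun N : Submodule Aᵐᵒᵖ F => idSMul J N)^[NN] (D (NN * k)) := by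
              rwa [← hit]
            exact idSMul_mono_left hNN (h2 h3)
          have h4 := idSMul_algebraMap_le a (D (NN * k)) h1
          have h5 : ((D (NN * k)).restrictScalars R) ≤ a ^ k • (⊤ : Submodule R F) :=
            fun y hy => ih hy
          have h6 := Submodule.smul_mono le_rfl h5 h4
          rwa [← hsm k] at h6
      -- the chain of lifts
      set q : ∀ n : ℕ, (F ⧸ D (n+1)) →ₗ[Aᵐᵒᵖ] (F ⧸ D n) := fun n =>
        Submodule.liftQ (D (n+1)) ((D n).mkQ)
          (by rw [Submodule.ker_mkQ]; exact hDdec n) with hq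
      have hq_apply : ∀ (n : ℕ) (x : F),
          q n (Submodule.Quotient.mk x) = Submodule.Quotient.mk x := fun n x => rfl
      have hqsurj : ∀ n, Function.Surjective (q n) := by
        intro n z
        obtain ⟨x, rfl⟩ := Submodule.Quotient.mk_surjective _ z
        exact ⟨Submodule.Quotient.mk x, hq_apply n x⟩
      have hqker : ∀ n, ∀ z ∈ LinearMap.ker (q n), ∀ j ∈ J, j • z = 0 := by
        intro n z hz j hj
        obtain ⟨x, rfl⟩ := Submodule.Quotient.mk_surjective _ z
        rw [LinearMap.mem_ker, hq_apply n x, Submodule.Quotient.mk_eq_zero] at hz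
        rw [← Submodule.Quotient.mk_smul, Submodule.Quotient.mk_eq_zero, hDsucc n]
        exact smul_mem_idSMul hj hz
      have step : ∀ (n : ℕ) (hn : G →ₗ[Aᵐᵒᵖ] (F ⧸ D n)),
          ∃ h' : G →ₗ[Aᵐᵒᵖ] (F ⧸ D (n+1)), q n ∘ₗ h' = hn :=
        fun n hn => exists_lift_of_flat J hJss hG (q n) (hqsurj n) (hqker n) hn
      let seq : ∀ n, G →ₗ[Aᵐᵒᵖ] (F ⧸ D n) := fun n =>
        Nat.rec (motive := fun n => G →ₗ[Aᵐᵒᵖ] (F ⧸ D n)) g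
          (fun n fn => (step n fn).choose) n
      have hseq : ∀ n, q n ∘ₗ seq (n+1) = seq n := fun n => (step n (seq n)).choose_spec
      -- choose representatives
      choose c hc using fun (n : ℕ) (x : G) =>
        Submodule.Quotient.mk_surjective (D n) (seq n x)
      have hcd : ∀ (n : ℕ) (x : G), c (n+1) x - c n x ∈ D n := by
        intro n x
        rw [← Submodule.Quotient.eq]
        have h2 := LinearMap.congr_fun (hseq n) x
        rw [LinearMap.comp_apply] at h2
        rw [← hc (n+1) x, hq_apply n (c (n+1) x)] at h2
        rw [h2, hc n x]
      have hctel : ∀ {m n : ℕ} (x : G), m ≤ n → c n x - c m x ∈ D m := by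
        intro m n x h
        induction h with
        | refl => simpa using (D m).zero_mem
        | @step k hk ih =>
          have h2 : c (k+1) x - c m x = (c (k+1) x - c k x) + (c k x - c m x) := by abel
          rw [h2]
          exact (D m).add_mem (hDle hk (hcd k x)) ih
      have hlim : ∀ x : G, ∃ L : F, ∀ k : ℕ,
          c (NN * k) x - L ∈ (a ^ k • (⊤ : Submodule R F) : Submodule R F) := by
        intro x
        have hcau : ∀ {k l : ℕ}, k ≤ l → c (NN * k) x ≡ c (NN * l) x
            [SMOD (a ^ k • (⊤ : Submodule R F) : Submodule R F)] := by
          intro k l hkl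
          rw [SModEq.sub_mem]
          have h1 : c (NN * k) x - c (NN * l) x = -(c (NN * l) x - c (NN * k) x) := by abel
          rw [h1]
          exact neg_mem (hDb k (hctel x (Nat.mul_le_mul_left NN hkl)))
        obtain ⟨L, hL⟩ := hprec.prec (f := fun k => c (NN * k) x) (fun {k l} h => hcau h)
        exact ⟨L, fun k => by have := hL k; rwa [SModEq.sub_mem] at this⟩
      choose Lf hLf using hlim
      have hd4 : ∀ (n : ℕ) (x y : G), c n (x + y) - c n x - c n y ∈ D n := by
        intro n x y
        rw [← Submodule.Quotient.mk_eq_zero]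
        rw [Submodule.Quotient.mk_sub, Submodule.Quotient.mk_sub, hc, hc, hc, map_add]
        abel
      have hd5 : ∀ (n : ℕ) (s : Aᵐᵒᵖ) (x : G), c n (s • x) - s • (c n x) ∈ D n := by
        intro n s x
        rw [← Submodule.Quotient.mk_eq_zero, Submodule.Quotient.mk_sub,
          Submodule.Quotient.mk_smul, hc, hc, map_smul, sub_self]
      set h : G →ₗ[Aᵐᵒᵖ] F :=
        { toFun := Lf
          map_add' := by
            intro x y
            have hv : Lf (x + y) - (Lf x + Lf y) = 0 := by
              refine hhaus _ fun k => ?_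
              have e1 := hLf (x + y) k
              have e2 := hLf x k
              have e3 := hLf y k
              have e4 := hDb k (hd4 (NN * k) x y)
              have hexp : Lf (x + y) - (Lf x + Lf y) =
                  -(c (NN * k) (x + y) - Lf (x + y)) +
                  (c (NN * k) (x + y) - c (NN * k) x - c (NN * k) y) +
                  (c (NN * k) x - Lf x) + (c (NN * k) y - Lf y) := by abel
              rw [hexp]
              exact add_mem (add_mem (add_mem (neg_mem e1) e4) e2) e3
            have := sub_eq_zero.1 hv
            exact this
          map_smul' := by
            intro s x
            have hv : Lf (s • x) - s • Lf x = 0 := by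
              refine hhaus _ fun k => ?_
              have e1 := hLf (s • x) k
              have e2 := hLf x k
              have e4 := hDb k (hd5 (NN * k) s x)
              have e5 := smul_mem_ideal_smul_top (a ^ k) s e2
              have hexp : Lf (s • x) - s • Lf x =
                  -(c (NN * k) (s • x) - Lf (s • x)) +
                  (c (NN * k) (s • x) - s • (c (NN * k) x)) +
                  (s • (c (NN * k) x) - s • Lf x) := by abel
              rw [hexp]
              refine add_mem (add_mem (neg_mem e1) e4) ?_
              rw [← smul_sub]
              exact smul_mem_ideal_smul_top (a ^ k) s e2
            have := sub_eq_zero.1 hv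
            simpa using this } with hhdef
      refine ⟨h, ?_⟩
      ext x
      have h1 : ∀ n : ℕ, (Submodule.Quotient.mk (c n x) : F ⧸ D0) = g x := by
        intro n
        induction n with
        | zero => exact hc 0 x
        | succ n ih =>
          have h2 : (Submodule.Quotient.mk (c (n+1) x) : F ⧸ D0) =
              Submodule.Quotient.mk (c n x) :=
            (Submodule.Quotient.eq D0).2 (hDle (Nat.zero_le n) (hcd n x))
          rw [h2, ih]
      have h3 : Lf x - c (NN * 1) x ∈ D0 := by
        have h4 := hLf x 1
        have h5 : Lf x - c (NN * 1) x = -(c (NN * 1) x - Lf x) := by abel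
        rw [h5]
        refine neg_mem ?_
        rw [hD0def]
        have h6 : (a ^ 1 • (⊤ : Submodule R F) : Submodule R F) =
            a • (⊤ : Submodule R F) := by rw [pow_one]
        rw [h6] at h4
        exact h4
      have h7 : (D0.mkQ ∘ₗ h) x = (Submodule.Quotient.mk (c (NN * 1) x) : F ⧸ D0) := by
        show (Submodule.Quotient.mk (Lf x) : F ⧸ D0) = _
        exact (Submodule.Quotient.eq D0).2 h3
      rw [h7, h1 (NN * 1)]
  · -- right minimality
    intro g hg
    have hgx : ∀ x : F, g x - x ∈ (a • (⊤ : Submodule R F) : Submodule R F) := by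
      intro x
      have h1 := LinearMap.congr_fun hg x
      have h2 : g x - x ∈ D0 := (Submodule.Quotient.eq D0).1 h1
      exact h2
    have hstep1 : ∀ (k : ℕ) {x : F}, x ∈ (a ^ k • (⊤ : Submodule R F) : Submodule R F) →
        g x - x ∈ (a ^ (k+1) • (⊤ : Submodule R F) : Submodule R F) := by
      intro k x hx
      rw [hsm2 k]
      refine Submodule.smul_induction_on hx (fun r hr y _ => ?_) (fun u v hu hv => ?_)
      · have h1 : g (r • y) - r • y = r • (g y - y) := by
          rw [map_central_smul g r y, smul_sub]
        rw [h1]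
        exact Submodule.smul_mem_smul hr (hgx y)
      · have h2 : g (u + v) - (u + v) = (g u - u) + (g v - v) := by
          rw [map_add]; abel
        rw [h2]
        exact Submodule.add_mem _ hu hv
    have hgpres : ∀ (k : ℕ) {v : F}, v ∈ (a ^ k • (⊤ : Submodule R F) : Submodule R F) →
        g v ∈ (a ^ k • (⊤ : Submodule R F) : Submodule R F) := by
      intro k v hv
      refine Submodule.smul_induction_on hv (fun r hr y _ => ?_) (fun u w hu hw => ?_)
      · rw [map_central_smul g r y]
        exact Submodule.smul_mem_smul hr Submodule.mem_top
      · rw [map_add]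
        exact Submodule.add_mem _ hu hw
    constructor
    · -- injective
      intro x₁ x₂ hx
      have h0 : g (x₁ - x₂) = 0 := by rw [map_sub, hx, sub_self]
      have hall : ∀ k : ℕ, x₁ - x₂ ∈ (a ^ k • (⊤ : Submodule R F) : Submodule R F) := by
        intro k
        induction k with
        | zero => rw [hpow0]; trivial
        | succ k ih =>
          have h1 := hstep1 k ih
          rw [h0, zero_sub] at h1
          have := neg_mem h1
          rwa [neg_neg] at this
      have := hhaus _ hall
      exact sub_eq_zero.1 this
    · -- surjective
      intro x
      set u : ℕ → F := fun k => Nat.rec (0 : F) (fun _ uk => uk + (x - g uk)) k with hu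
      have hux : ∀ k, x - g (u k) ∈ (a ^ k • (⊤ : Submodule R F) : Submodule R F) := by
        intro k
        induction k with
        | zero => rw [hpow0]; trivial
        | succ k ih =>
          have h1 : u (k+1) = u k + (x - g (u k)) := rfl
          have h2 : x - g (u (k+1)) = -(g (x - g (u k)) - (x - g (u k))) := by
            rw [h1, map_add]
            abel
          rw [h2]
          exact neg_mem (hstep1 k ih)
      have hucau : ∀ {k l : ℕ}, k ≤ l →
          u k ≡ u l [SMOD (a ^ k • (⊤ : Submodule R F) : Submodule R F)] := by
        intro k l hkl
        rw [SModEq.sub_mem]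
        induction hkl with
        | refl => simpa using Submodule.zero_mem _
        | @step m hm ih =>
          have h1 : u k - u (m+1) = (u k - u m) - (x - g (u m)) := by
            have : u (m+1) = u m + (x - g (u m)) := rfl
            rw [this]; abel
          rw [h1]
          refine Submodule.sub_mem _ ih ?_
          exact Submodule.smul_mono_left (Ideal.pow_le_pow_right hm) (hux m)
      obtain ⟨y, hy⟩ := hprec.prec (f := u) (fun {k l} hkl => hucau hkl)
      refine ⟨y, ?_⟩
      have hvy : x - g y = 0 := by
        refine hhaus _ fun k => ?_
        have h1 := hux k
        have h2 : u k - y ∈ (a ^ k • (⊤ : Submodule R F) : Submodule R F) := by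
          have := hy k
          rwa [SModEq.sub_mem] at this
        have h3 := hgpres k h2
        rw [map_sub] at h3
        have h4 : x - g y = (x - g (u k)) + (g (u k) - g y) := by abel
        rw [h4]
        exact Submodule.add_mem _ h1 h3
      exact (sub_eq_zero.1 hvy).symm
end

section
/- Let (R, m, k) be a commutative noetherian local ring and A a Noether R-algebra. For every maximal two-sided ideal P of A there is an isomorphism Hom_R(S_{A^op}(P), E_R(k)) ≅ S_A(P) of right A-modules. Consequently, the assignment S_{A^op}(P) ↦ S_A(P) is a bijection between the set of isomorphism classes of simple left A-modules and the set of isomorphism classes of simple right A-modules. -/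
/-!
Common definitions: module-theoretic notions over a (possibly noncommutative) ring,
notions relative to a central base ring, and Hom-module structures.
Right `A`-modules are treated as left `Aᵐᵒᵖ`-modules.
-/

universe u

open MulOpposite

/-- A bundled module over a ring `S`. -/
structure ModuleOver (S : Type u) [Ring S] : Type (u + 1) where
  carrier : Type u
  [addCommGroup : AddCommGroup carrier]
  [mod : Module S carrier]

attribute [instance] ModuleOver.addCommGroup ModuleOver.mod


namespace MatlisAux

open IsLocalRing

section Local

variable {R : Type u} [CommRing R] [IsLocalRing R]

local notation "k" => ResidueField R

lemma residue_smul {M : Type u} [AddCommGroup M] [Module R M]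
    [Module k M] [IsScalarTower R k M] (r : R) (x : M) :
    (residue R r) • x = r • x :=
  algebraMap_smul k r x

/-- `M` is killed by the maximal ideal. -/
def MT (R : Type u) [CommRing R] [IsLocalRing R] (M : Type u) [AddCommGroup M] [Module R M] :
    Prop :=
  ∀ r ∈ maximalIdeal R, ∀ x : M, r • x = 0

variable {M : Type u} [AddCommGroup M] [Module R M]

lemma MT.isTorsionBySet (h : MT R M) :
    Module.IsTorsionBySet R M (maximalIdeal R) :=
  fun x r => h r.1 r.2 x

/-- The induced `k`-module structure on an `m`-torsion module. -/
noncomputable def MT.kmod (h : MT R M) : Module k M :=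
  h.isTorsionBySet.module

end Local

end MatlisAux

namespace MatlisAux
open IsLocalRing

section Envelope

variable {R : Type u} [CommRing R] [IsLocalRing R]
  {E : Type u} [AddCommGroup E] [Module R E]
  (e : ResidueField R →ₗ[R] E)

lemma range_mt {x : E} (hx : x ∈ LinearMap.range e) :
    ∀ r ∈ maximalIdeal R, r • x = 0 := by
  obtain ⟨c, rfl⟩ := hx
  intro r hr
  rw [← map_smul, Algebra.smul_def,
    show algebraMap R (ResidueField R) r = 0 from Ideal.Quotient.eq_zero_iff_mem.mpr hr,
    zero_mul, map_zero]

lemma mem_range_of_mt (he : IsInjEnvelope e) {x : E}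
    (hx : ∀ r ∈ maximalIdeal R, r • x = 0) : x ∈ LinearMap.range e := by
  classical
  set V : Submodule R E :=
    { carrier := {y | ∀ r ∈ maximalIdeal R, r • y = 0}
      add_mem' := fun {a b} ha hb r hr => by rw [smul_add, ha r hr, hb r hr, add_zero]
      zero_mem' := fun r hr => smul_zero r
      smul_mem' := fun c y hy r hr => by rw [smul_comm, hy r hr, smul_zero] } with hVdef
  have hVmt : MT R V := fun r hr y => Subtype.ext (by simpa using y.2 r hr)
  letI := hVmt.kmod
  haveI : IsScalarTower R (ResidueField R) V := hVmt.isTorsionBySet.isScalarTower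
  let W : Submodule (ResidueField R) V :=
    { carrier := {v | (v : E) ∈ LinearMap.range e}
      add_mem' := by
        rintro a b ⟨ca, hca⟩ ⟨cb, hcb⟩
        exact ⟨ca + cb, by rw [map_add, hca, hcb]; rfl⟩
      zero_mem' := ⟨0, by rw [map_zero]; rfl⟩
      smul_mem' := by
        intro c v hv
        obtain ⟨r, rfl⟩ := residue_surjective (R := R) c
        rw [Set.mem_setOf_eq, residue_smul]
        simpa using Submodule.smul_mem (LinearMap.range e) r hv }
  obtain ⟨W', hW'⟩ := Submodule.exists_isCompl W
  have hKbot : (W'.restrictScalars R).map V.subtype = ⊥ := by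
    refine he.2.2 _ (eq_bot_iff.mpr ?_)
    rintro y ⟨hy1, hy2⟩
    obtain ⟨v, hv, rfl⟩ := hy1
    have hvW : v ∈ W ⊓ W' := ⟨hy2, hv⟩
    rw [hW'.inf_eq_bot] at hvW
    simp only [Submodule.mem_bot] at hvW
    simp [hvW]
  have hxV : (⟨x, hx⟩ : V) ∈ (W ⊔ W' : Submodule (ResidueField R) V) := by
    rw [hW'.sup_eq_top]; trivial
  rw [Submodule.mem_sup] at hxV
  obtain ⟨w, hw, w', hw', hsum⟩ := hxV
  have hw'0 : (w' : E) = 0 := by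
    have hmem : (w' : E) ∈ (W'.restrictScalars R).map V.subtype :=
      ⟨w', hw', rfl⟩
    rw [hKbot] at hmem
    simpa using hmem
  have hxw : x = (w : E) := by
    have h2 := congrArg (Subtype.val : V → E) hsum
    simp only [Submodule.coe_add, hw'0, add_zero] at h2
    exact h2.symm
  rw [hxw]; exact hw

lemma apply_mt (he : IsInjEnvelope e) {M : Type u} [AddCommGroup M] [Module R M] (h : MT R M)
    (f : M →ₗ[R] E) (x : M) : f x ∈ LinearMap.range e :=
  mem_range_of_mt e he (fun r hr => by rw [← map_smul, h r hr x, map_zero])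

/-- Factorization of a map into `E` from an `m`-torsion module through `e`. -/
noncomputable def factor (he : IsInjEnvelope e) {M : Type u} [AddCommGroup M] [Module R M] (h : MT R M)
    (f : M →ₗ[R] E) : M →ₗ[R] ResidueField R :=
  (((LinearEquiv.ofInjective e he.1).symm :
      LinearMap.range e ≃ₗ[R] ResidueField R) :
        LinearMap.range e →ₗ[R] ResidueField R) ∘ₗ
    f.codRestrict _ (apply_mt e he h f)

lemma e_symm_apply (he : IsInjEnvelope e) (y : LinearMap.range e) :
    e ((LinearEquiv.ofInjective e he.1).symm y) = y := by
  rw [← LinearEquiv.ofInjective_apply e (h := he.1),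
    (LinearEquiv.ofInjective e he.1).apply_symm_apply]

lemma factor_spec (he : IsInjEnvelope e) {M : Type u} [AddCommGroup M] [Module R M] (h : MT R M)
    (f : M →ₗ[R] E) (x : M) : e (factor e he h f x) = f x :=
  e_symm_apply e he _

/-- An `R`-linear map between `k`-modules is `k`-linear. -/
noncomputable def kify {M : Type u} [AddCommGroup M] [Module R M] [Module (ResidueField R) M]
    [IsScalarTower R (ResidueField R) M] (f : M →ₗ[R] ResidueField R) :
    M →ₗ[ResidueField R] ResidueField R where
  toFun := f
  map_add' := f.map_add
  map_smul' := fun c x => by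
    obtain ⟨r, rfl⟩ := residue_surjective (R := R) c
    simp only [RingHom.id_apply]
    rw [residue_smul, map_smul, residue_smul]

@[simp] lemma kify_apply {M : Type u} [AddCommGroup M] [Module R M]
    [Module (ResidueField R) M] [IsScalarTower R (ResidueField R) M]
    (f : M →ₗ[R] ResidueField R) (x : M) : kify f x = f x := rfl

lemma exists_functional (he : IsInjEnvelope e) {M : Type u} [AddCommGroup M] [Module R M] (h : MT R M)
    {x : M} (hx : x ≠ 0) : ∃ f : M →ₗ[R] E, f x ≠ 0 := by
  letI := h.kmod
  haveI : IsScalarTower R (ResidueField R) M := h.isTorsionBySet.isScalarTower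
  have hne : ¬∀ φ : Module.Dual (ResidueField R) M, φ x = 0 := by
    rw [Module.forall_dual_apply_eq_zero_iff]; exact hx
  push_neg at hne
  obtain ⟨φ, hφ⟩ := hne
  refine ⟨e ∘ₗ (φ.restrictScalars R), fun hc => hφ ?_⟩
  apply he.1
  simpa using hc

end Envelope

end MatlisAux

namespace MatlisAux
open IsLocalRing

section Alg

variable {R : Type u} [CommRing R] [IsLocalRing R]
  {E : Type u} [AddCommGroup E] [Module R E]
  (e : ResidueField R →ₗ[R] E)
  {B : Type u} [Ring B] [Algebra R B]
  {S : Type u} [AddCommGroup S] [Module R S] [Module B S] [IsScalarTower R B S]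

lemma simple_finite [Module.Finite R B] (hS : IsSimpleModule B S) :
    Module.Finite R S := by
  haveI := hS
  haveI : Nontrivial S := IsSimpleModule.nontrivial B S
  obtain ⟨x, hx⟩ := exists_ne (0 : S)
  haveI : Module.Finite B S := ⟨⟨{x}, by
    rw [Finset.coe_singleton]
    exact IsSimpleModule.span_singleton_eq_top B hx⟩⟩
  exact Module.Finite.trans B S

lemma simple_mt [Module.Finite R B] (hS : IsSimpleModule B S) : MT R S := by
  haveI := hS
  haveI : Nontrivial S := IsSimpleModule.nontrivial B S
  haveI : Module.Finite R S := simple_finite hS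
  intro r hr
  set φ : S →ₗ[B] S :=
    { toFun := fun x => r • x
      map_add' := fun a b => smul_add r a b
      map_smul' := fun b y => smul_comm r b y } with hφ
  rcases φ.bijective_or_eq_zero with hb | h0
  · exfalso
    have htop : (⊤ : Submodule R S) ≤ (maximalIdeal R) • (⊤ : Submodule R S) := by
      intro x _
      obtain ⟨y, hy⟩ := hb.2 x
      have : x = r • y := hy.symm
      rw [this]
      exact Submodule.smul_mem_smul hr Submodule.mem_top
    have hbot := Submodule.eq_bot_of_le_smul_of_le_jacobson_bot (maximalIdeal R)
      (⊤ : Submodule R S) Module.Finite.fg_top htop (maximalIdeal_le_jacobson ⊥)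
    obtain ⟨z, hz⟩ := exists_ne (0 : S)
    have hz2 : z ∈ (⊥ : Submodule R S) := by
      rw [← hbot]; exact Submodule.mem_top
    exact hz (by simpa using hz2)
  · intro x
    exact LinearMap.ext_iff.mp h0 x

lemma dual_mt {M : Type u} [AddCommGroup M] [Module R M] (h : MT R M) :
    MT R (M →ₗ[R] E) := by
  intro r hr f
  ext x
  show r • f x = (0 : M →ₗ[R] E) x
  rw [← map_smul, h r hr x, map_zero, LinearMap.zero_apply]

lemma rsmul_eq (r : R) (f : S →ₗ[R] E) :
    (op (algebraMap R B r)) • f = r • f := by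
  ext x
  rw [homRight_smul_apply]
  show f ((algebraMap R B r) • x) = r • f x
  rw [algebraMap_smul, map_smul]

lemma dual_simple (he : IsInjEnvelope e) [Module.Finite R B]
    (hS : IsSimpleModule B S) : IsSimpleModule Bᵐᵒᵖ (S →ₗ[R] E) := by
  classical
  haveI := hS
  have hmt : MT R S := simple_mt hS
  haveI : Module.Finite R S := simple_finite hS
  letI := hmt.kmod
  haveI : IsScalarTower R (ResidueField R) S := hmt.isTorsionBySet.isScalarTower
  haveI : Module.Finite (ResidueField R) S :=
    Module.Finite.of_restrictScalars_finite R (ResidueField R) S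
  haveI : Nontrivial S := IsSimpleModule.nontrivial B S
  obtain ⟨x0, hx0⟩ := exists_ne (0 : S)
  obtain ⟨f0, hf0⟩ := exists_functional e he hmt hx0
  haveI : Nontrivial (S →ₗ[R] E) :=
    ⟨0, f0, fun hc => hf0 (by rw [← hc]; rfl)⟩
  rw [isSimpleModule_iff]; constructor
  intro N
  rcases eq_or_ne N ⊥ with hN | hN
  · exact Or.inl hN
  right
  let Wk : Submodule B S :=
    { carrier := {x | ∀ f : S →ₗ[R] E, f ∈ N → f x = 0}
      add_mem' := fun {a b} ha hb f hf => by rw [map_add, ha f hf, hb f hf, add_zero]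
      zero_mem' := fun f _ => map_zero f
      smul_mem' := fun b x hx f hf => by
        have h2 := hx _ (N.smul_mem (op b) hf)
        rw [homRight_smul_apply] at h2
        exact h2 }
  have hWbot : Wk = ⊥ := by
    rcases eq_bot_or_eq_top Wk with h | h
    · exact h
    · exfalso
      obtain ⟨f, hfN, hfne⟩ := (Submodule.ne_bot_iff N).mp hN
      apply hfne
      ext x
      have hxW : x ∈ Wk := h ▸ (Submodule.mem_top : x ∈ (⊤ : Submodule B S))
      rw [hxW f hfN, LinearMap.zero_apply]
  let ι : Module.Dual (ResidueField R) S → (S →ₗ[R] E) :=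
    fun φ => e ∘ₗ (φ.restrictScalars R)
  let N' : Submodule (ResidueField R) (Module.Dual (ResidueField R) S) :=
    { carrier := {φ | ι φ ∈ N}
      add_mem' := fun {a b} ha hb => by
        have hab : ι (a + b) = ι a + ι b := by ext x; simp [ι]
        show ι (a + b) ∈ N
        rw [hab]; exact N.add_mem ha hb
      zero_mem' := by
        have h0 : ι 0 = 0 := by ext x; simp [ι]
        show ι 0 ∈ N
        rw [h0]; exact N.zero_mem
      smul_mem' := by
        intro c φ hφ
        obtain ⟨r, rfl⟩ := residue_surjective (R := R) c
        show ι (residue R r • φ) ∈ N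
        have key : ι (residue R r • φ) = (op (algebraMap R B r)) • ι φ := by
          rw [rsmul_eq]
          ext x
          show e ((residue R r • φ) x) = r • (ι φ) x
          rw [LinearMap.smul_apply, residue_smul, map_smul]
          rfl
        rw [key]; exact N.smul_mem _ hφ }
  have hcoann : N'.dualCoannihilator = ⊥ := by
    rw [eq_bot_iff]
    intro x hx
    rw [Submodule.mem_dualCoannihilator] at hx
    have hxW : x ∈ Wk := by
      intro f hf
      have hι : ι (kify (factor e he hmt f)) = f := by
        ext y
        show e (factor e he hmt f y) = f y
        exact factor_spec e he hmt f y
      have hφN : kify (factor e he hmt f) ∈ N' := by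
        show ι _ ∈ N; rw [hι]; exact hf
      have hz := hx _ hφN
      rw [← factor_spec e he hmt f x,
        show factor e he hmt f x = kify (factor e he hmt f) x from rfl, hz, map_zero]
    rw [hWbot] at hxW
    simpa using hxW
  have hN'top : N' = ⊤ := by
    have hdc := Subspace.dualCoannihilator_dualAnnihilator_eq (W := N')
    rw [hcoann, Submodule.dualAnnihilator_bot] at hdc
    exact hdc.symm
  rw [eq_top_iff]
  intro g _
  have hι : ι (kify (factor e he hmt g)) = g := by
    ext y
    show e (factor e he hmt g y) = g y
    exact factor_spec e he hmt g y
  have hg : kify (factor e he hmt g) ∈ N' := hN'top ▸ Submodule.mem_top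
  rw [← hι]; exact hg

lemma dual_ann (he : IsInjEnvelope e) [Module.Finite R B]
    (hS : IsSimpleModule B S) (b : B) :
    (∀ f : S →ₗ[R] E, op b • f = 0) ↔ ∀ x : S, b • x = 0 := by
  haveI := hS
  have hmt : MT R S := simple_mt hS
  constructor
  · intro hb x
    by_contra hbx
    obtain ⟨f, hf⟩ := exists_functional e he hmt hbx
    apply hf
    have h2 : (op b • f) x = (0 : S →ₗ[R] E) x := by rw [hb f]
    rw [homRight_smul_apply, LinearMap.zero_apply] at h2
    exact h2
  · intro hb f
    ext x
    rw [homRight_smul_apply, LinearMap.zero_apply]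
    show f (b • x) = 0
    rw [hb x, map_zero]

/-- Evaluation at `x` as a linear map on the `E`-dual. -/
def evMap {M : Type u} [AddCommGroup M] [Module R M] (x : M) :
    (M →ₗ[R] E) →ₗ[R] E where
  toFun := fun f => f x
  map_add' := fun f g => rfl
  map_smul' := fun r f => rfl

lemma eval_bijective (he : IsInjEnvelope e) [Module.Finite R B]
    (hS : IsSimpleModule B S) :
    Function.Bijective (fun x : S => (evMap x : (S →ₗ[R] E) →ₗ[R] E)) := by
  classical
  haveI := hS
  have hmt : MT R S := simple_mt hS
  haveI : Module.Finite R S := simple_finite hS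
  letI := hmt.kmod
  haveI : IsScalarTower R (ResidueField R) S := hmt.isTorsionBySet.isScalarTower
  haveI : Module.Finite (ResidueField R) S :=
    Module.Finite.of_restrictScalars_finite R (ResidueField R) S
  have hDmt : MT R (S →ₗ[R] E) := dual_mt hmt
  constructor
  · intro x y hxy
    by_contra hne
    have hsub : x - y ≠ 0 := sub_ne_zero.mpr hne
    obtain ⟨f, hf⟩ := exists_functional e he hmt hsub
    apply hf
    have hfx : evMap (E := E) x = evMap y := hxy
    have := congrFun (congrArg (fun (Φ : (S →ₗ[R] E) →ₗ[R] E) => (Φ : (S →ₗ[R] E) → E)) hfx) f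
    show f (x - y) = 0
    rw [map_sub]
    exact sub_eq_zero.mpr this
  · intro Φ
    let ι : Module.Dual (ResidueField R) S → (S →ₗ[R] E) :=
      fun φ => e ∘ₗ (φ.restrictScalars R)
    let ψ : Module.Dual (ResidueField R) (Module.Dual (ResidueField R) S) :=
      { toFun := fun φ => factor e he hDmt Φ (ι φ)
        map_add' := fun a b => by
          have hab : ι (a + b) = ι a + ι b := by ext x; simp [ι]
          show factor e he hDmt Φ (ι (a + b)) =
            factor e he hDmt Φ (ι a) + factor e he hDmt Φ (ι b)
          rw [hab, map_add]
        map_smul' := fun c φ => by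
          obtain ⟨r, rfl⟩ := residue_surjective (R := R) c
          simp only [RingHom.id_apply]
          have key : ι (residue R r • φ) = r • ι φ := by
            ext x
            show e ((residue R r • φ) x) = r • (ι φ) x
            rw [LinearMap.smul_apply, residue_smul, map_smul]
            rfl
          show factor e he hDmt Φ (ι (residue R r • φ)) =
            residue R r • factor e he hDmt Φ (ι φ)
          rw [key, map_smul, residue_smul] }
    obtain ⟨x, hx⟩ := (Module.evalEquiv (ResidueField R) S).surjective ψ
    refine ⟨x, ?_⟩
    ext f
    show f x = Φ f
    have hι : ι (kify (factor e he hmt f)) = f := by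
      ext y
      show e (factor e he hmt f y) = f y
      exact factor_spec e he hmt f y
    have h1 : f x = e (kify (factor e he hmt f) x) := (factor_spec e he hmt f x).symm
    have h2 : (Module.evalEquiv (ResidueField R) S x) (kify (factor e he hmt f))
        = kify (factor e he hmt f) x := rfl
    rw [h1, ← h2, hx]
    show e (factor e he hDmt Φ (ι (kify (factor e he hmt f)))) = Φ f
    rw [hι, factor_spec e he hDmt Φ f]

end Alg

end MatlisAux

namespace MatlisAux
open IsLocalRing

section Unique

variable {R : Type u} [CommRing R] [IsLocalRing R]
  {B : Type u} [Ring B] [Algebra R B] [Module.Finite R B]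

lemma simple_semisimple {S : Type u} [AddCommGroup S] [Module B S]
    (hS : IsSimpleModule B S) : IsSemisimpleModule B S := by
  haveI := hS
  apply IsSemisimpleModule.of_sSup_simples_eq_top
  apply le_antisymm le_top
  have htop : IsSimpleModule B (⊤ : Submodule B S) :=
    IsSimpleModule.congr (Submodule.topEquiv)
  exact le_sSup htop

include R in
set_option synthInstance.maxHeartbeats 1000000 in
set_option maxHeartbeats 1600000 in
lemma iso_of_ann {S' S'' : Type u} [AddCommGroup S'] [Module B S']
    [AddCommGroup S''] [Module B S'']
    (h' : IsSimpleModule B S') (h'' : IsSimpleModule B S'')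
    (hann : ∀ b : B, (∀ x : S', b • x = 0) ↔ (∀ y : S'', b • y = 0)) :
    Nonempty (S' ≃ₗ[B] S'') := by
  classical
  haveI := h'
  haveI := h''
  letI : Module R S' := Module.compHom S' (algebraMap R B)
  haveI : IsScalarTower R B S' := ⟨fun r b x => by
    show (r • b) • x = algebraMap R B r • (b • x)
    rw [Algebra.smul_def, mul_smul]⟩
  have hmt' : MT R S' := simple_mt h'
  haveI : Module.Finite R S' := simple_finite h'
  letI := hmt'.kmod
  haveI : IsScalarTower R (ResidueField R) S' := hmt'.isTorsionBySet.isScalarTower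
  haveI : Module.Finite (ResidueField R) S' :=
    Module.Finite.of_restrictScalars_finite R (ResidueField R) S'
  obtain ⟨T, hT⟩ := Module.Finite.fg_top (R := ResidueField R) (M := S')
  haveI : Nontrivial S'' := IsSimpleModule.nontrivial B S''
  obtain ⟨y0, hy0⟩ := exists_ne (0 : S'')
  let ψ : B →ₗ[B] ({x // x ∈ T} → S') :=
    { toFun := fun b => fun i => b • (i : S')
      map_add' := fun a b => by
        funext i
        exact add_smul a b (i : S')
      map_smul' := fun c b => by
        funext i
        show (c • b) • (i : S') = c • (b • (i : S'))
        rw [smul_eq_mul, mul_smul] }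
  have hker : ∀ b : B, (∀ i : {x // x ∈ T}, b • (i : S') = 0) → ∀ x : S', b • x = 0 := by
    intro b hb x
    let Z : Submodule (ResidueField R) S' :=
      { carrier := {y | b • y = 0}
        add_mem' := fun {y z} hy hz => by
          show b • (y + z) = 0
          rw [smul_add, hy, hz, add_zero]
        zero_mem' := smul_zero b
        smul_mem' := by
          intro c y hy
          obtain ⟨r, rfl⟩ := residue_surjective (R := R) c
          show b • (residue R r • y) = 0
          rw [residue_smul, smul_comm, (hy : b • y = 0), smul_zero] }
    have hZ : (⊤ : Submodule (ResidueField R) S') ≤ Z := by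
      rw [← hT]
      exact Submodule.span_le.mpr (fun t ht => hb ⟨t, ht⟩)
    exact hZ Submodule.mem_top
  let θ : B →ₗ[B] S'' :=
    { toFun := fun b => b • y0
      map_add' := fun a b => add_smul a b y0
      map_smul' := fun c b => by
        show (c • b) • y0 = c • (b • y0)
        rw [smul_eq_mul, mul_smul] }
  have hθsur : Function.Surjective θ := by
    rw [← LinearMap.range_eq_top]
    rcases eq_bot_or_eq_top (LinearMap.range θ) with h | h
    · exfalso
      apply hy0
      have hmem : θ 1 ∈ LinearMap.range θ := ⟨1, rfl⟩
      rw [h] at hmem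
      simpa [θ] using hmem
    · exact h
  have hle : LinearMap.ker ψ ≤ LinearMap.ker θ := by
    intro b hb
    have hb' : ∀ i : {x // x ∈ T}, b • (i : S') = 0 := by
      intro i
      have := congrFun (LinearMap.mem_ker.mp hb) i
      exact this
    show θ b = 0
    exact ((hann b).mp (hker b hb')) y0
  let q := (LinearMap.ker ψ).liftQ θ hle
  have hqsur : Function.Surjective q := by
    intro y
    obtain ⟨b, hb⟩ := hθsur y
    exact ⟨Submodule.Quotient.mk b, hb⟩
  let eqr := LinearMap.quotKerEquivRange ψ
  let τ : (LinearMap.range ψ) →ₗ[B] S'' := q ∘ₗ (eqr.symm : _ →ₗ[B] _)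
  have hτsur : Function.Surjective τ := hqsur.comp eqr.symm.surjective
  haveI : IsSemisimpleModule B S' := simple_semisimple h'
  haveI hPi : IsSemisimpleModule B ({x // x ∈ T} → S') := by
    apply isSemisimpleModule_of_isSemisimpleModule_submodule'
      (p := fun i => LinearMap.range (LinearMap.single B (fun _ : {x // x ∈ T} => S') i))
    · intro i
      have hinj : Function.Injective (LinearMap.single B (fun _ : {x // x ∈ T} => S') i) :=
        LinearMap.ker_eq_bot.mp (LinearMap.ker_single B _ i)
      exact IsSemisimpleModule.congr (LinearEquiv.ofInjective _ hinj).symm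
    · exact LinearMap.iSup_range_single B _
  obtain ⟨C, hC⟩ := exists_isCompl (LinearMap.ker τ)
  let τC : C →ₗ[B] S'' := τ ∘ₗ C.subtype
  have hτCbij : Function.Bijective τC := by
    constructor
    · intro u v huv
      have hmem : (u : LinearMap.range ψ) - v ∈ LinearMap.ker τ ⊓ C := by
        rw [Submodule.mem_inf]
        refine ⟨?_, sub_mem u.2 v.2⟩
        rw [LinearMap.mem_ker, map_sub]
        have h1 : τ (u : LinearMap.range ψ) = τ v := huv
        rw [h1, sub_self]
      rw [hC.inf_eq_bot] at hmem
      simp only [Submodule.mem_bot, sub_eq_zero] at hmem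
      exact Subtype.ext hmem
    · intro y
      obtain ⟨z, hz⟩ := hτsur y
      have hz2 : z ∈ LinearMap.ker τ ⊔ C := by rw [hC.sup_eq_top]; trivial
      rw [Submodule.mem_sup] at hz2
      obtain ⟨us, hu, v, hv, huv⟩ := hz2
      refine ⟨⟨v, hv⟩, ?_⟩
      show τ v = y
      have hτz : τ z = τ us + τ v := by rw [← huv, map_add]
      rw [LinearMap.mem_ker.mp hu, zero_add] at hτz
      rw [← hτz, hz]
  let g1 : C ≃ₗ[B] S'' := LinearEquiv.ofBijective τC hτCbij
  haveI : IsSimpleModule B C := IsSimpleModule.congr g1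
  let inc : C →ₗ[B] ({x // x ∈ T} → S') := (LinearMap.range ψ).subtype ∘ₗ C.subtype
  have hincinj : Function.Injective inc := by
    intro a b hab
    exact Subtype.ext (Subtype.ext hab)
  have hproj : ∃ i : {x // x ∈ T}, (LinearMap.proj (R := B) (φ := fun _ => S') i) ∘ₗ inc ≠ 0 := by
    by_contra hcon
    push_neg at hcon
    haveI : Nontrivial C := IsSimpleModule.nontrivial B C
    obtain ⟨c0, hc0⟩ := exists_ne (0 : C)
    apply hc0
    apply hincinj
    rw [map_zero]
    funext i
    exact congrFun (congrArg (fun (g : C →ₗ[B] S') => (g : C → S')) (hcon i)) c0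
  obtain ⟨i, hi⟩ := hproj
  set p : C →ₗ[B] S' := (LinearMap.proj (R := B) (φ := fun _ => S') i) ∘ₗ inc with hp
  have hpker : LinearMap.ker p = ⊥ := by
    haveI : IsSimpleOrder (Submodule B C) := (inferInstance : IsSimpleModule B C).toIsSimpleOrder
    rcases eq_bot_or_eq_top (LinearMap.ker p) with h | h
    · exact h
    · exfalso
      apply hi
      ext c
      have hc : c ∈ LinearMap.ker p := h ▸ (Submodule.mem_top : c ∈ (⊤ : Submodule B C))
      exact LinearMap.mem_ker.mp hc
  have hprange : LinearMap.range p = ⊤ := by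
    rcases eq_bot_or_eq_top (LinearMap.range p) with h | h
    · exfalso
      apply hi
      ext c
      have hc : p c ∈ LinearMap.range p := ⟨c, rfl⟩
      rw [h] at hc
      simpa using hc
    · exact h
  have hbij2 : Function.Bijective p :=
    ⟨(LinearMap.ker_eq_bot (M := C)).mp hpker, LinearMap.range_eq_top.mp hprange⟩
  exact ⟨(LinearEquiv.ofBijective p hbij2).symm.trans g1⟩

end Unique

section Transfer

variable {A : Type u} [Ring A]

lemma isSimpleModule_op {X : Type u} [AddCommGroup X]
    [Module A X] [Module Aᵐᵒᵖᵐᵒᵖ X]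
    (hsmul : ∀ (a : A) (x : X), a • x = (op (op a)) • x)
    (h : IsSimpleModule Aᵐᵒᵖᵐᵒᵖ X) : IsSimpleModule A X := by
  haveI := h
  haveI : Nontrivial X := IsSimpleModule.nontrivial Aᵐᵒᵖᵐᵒᵖ X
  rw [isSimpleModule_iff]; constructor
  intro N
  let N2 : Submodule Aᵐᵒᵖᵐᵒᵖ X :=
    { carrier := N
      add_mem' := fun {a b} ha hb => N.add_mem ha hb
      zero_mem' := N.zero_mem
      smul_mem' := fun c x hx => by
        have hc : c = op (op c.unop.unop) := rfl
        rw [hc, ← hsmul]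
        exact N.smul_mem _ hx }
  rcases eq_bot_or_eq_top N2 with h2 | h2
  · left
    rw [eq_bot_iff]
    intro x hx
    have : x ∈ N2 := hx
    rw [h2] at this
    simpa using this
  · right
    rw [eq_top_iff]
    intro x _
    have : x ∈ N2 := h2 ▸ (Submodule.mem_top : x ∈ (⊤ : Submodule Aᵐᵒᵖᵐᵒᵖ X))
    exact this

end Transfer

end MatlisAux


open MatlisAux in
set_option maxHeartbeats 1600000 in
set_option synthInstance.maxHeartbeats 400000 in
/-- Let `(R, m, k)` be a commutative noetherian local ring and `A` a
Noether `R`-algebra. For every maximal two-sided ideal `P` of `A`,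
`Hom_R(S_{A^op}(P), E_R(k)) ≅ S_A(P)` as right `A`-modules, where the simple left
(resp. right) module attached to `P` is characterized by having annihilator `P`.
Consequently `S_{A^op}(P) ↦ S_A(P)` is a bijection on isomorphism classes of simple
left and simple right `A`-modules (realized by `S ↦ Hom_R(S, E_R(k))`). -/
theorem matlis_dual_of_simple_modules
    {R A : Type u} [CommRing R] [IsNoetherianRing R] [IsLocalRing R]
    [Ring A] [Algebra R A] [Module.Finite R A]
    (E : Type u) [AddCommGroup E] [Module R E]
    (e : IsLocalRing.ResidueField R →ₗ[R] E) (he : IsInjEnvelope e) :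
    (∀ P : Ideal A, IsMaximalTwoSided P →
      ∀ (S : Type u) [AddCommGroup S] [Module R S] [Module A S] [IsScalarTower R A S],
        IsSimpleModule A S → {a : A | ∀ x : S, a • x = 0} = (P : Set A) →
        ∀ (S' : Type u) [AddCommGroup S'] [Module Aᵐᵒᵖ S'],
          IsSimpleModule Aᵐᵒᵖ S' → {a : A | ∀ x : S', op a • x = 0} = (P : Set A) →
          Nonempty ((S →ₗ[R] E) ≃ₗ[Aᵐᵒᵖ] S')) ∧
    (∀ (S : Type u) [AddCommGroup S] [Module R S] [Module A S] [IsScalarTower R A S],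
      IsSimpleModule A S → IsSimpleModule Aᵐᵒᵖ (S →ₗ[R] E)) ∧
    (∀ (S₁ S₂ : Type u) [AddCommGroup S₁] [Module R S₁] [Module A S₁]
      [IsScalarTower R A S₁] [AddCommGroup S₂] [Module R S₂] [Module A S₂]
      [IsScalarTower R A S₂],
      IsSimpleModule A S₁ → IsSimpleModule A S₂ →
      Nonempty ((S₁ →ₗ[R] E) ≃ₗ[Aᵐᵒᵖ] (S₂ →ₗ[R] E)) → Nonempty (S₁ ≃ₗ[A] S₂)) ∧
    (∀ (S' : Type u) [AddCommGroup S'] [Module Aᵐᵒᵖ S'], IsSimpleModule Aᵐᵒᵖ S' →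
      ∃ SL : LeftModule R A, IsSimpleModule A SL.carrier ∧
        Nonempty ((SL.carrier →ₗ[R] E) ≃ₗ[Aᵐᵒᵖ] S')) := by
  haveI hfinop : Module.Finite R Aᵐᵒᵖ :=
    Module.Finite.equiv (MulOpposite.opLinearEquiv R : A ≃ₗ[R] Aᵐᵒᵖ)
  refine ⟨?_, ?_, ?_, ?_⟩
  · -- Part 1
    intro P hP S _ _ _ _ hSsimple hSann S' _ _ hS'simple hS'ann
    haveI := hSsimple
    haveI := hS'simple
    haveI hD : IsSimpleModule Aᵐᵒᵖ (S →ₗ[R] E) := dual_simple e he hSsimple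
    refine iso_of_ann (R := R) (B := Aᵐᵒᵖ) hD hS'simple ?_
    intro b
    have e1 : (∀ f : S →ₗ[R] E, b • f = 0) ↔ (∀ x : S, b.unop • x = 0) := by
      have h1 := dual_ann e he hSsimple b.unop
      simpa using h1
    have e2 : (∀ x : S, b.unop • x = 0) ↔ ((b.unop : A) ∈ (P : Set A)) := by
      rw [← hSann]; exact Iff.rfl
    have e3 : ((b.unop : A) ∈ (P : Set A)) ↔ (∀ y : S', b • y = 0) := by
      rw [← hS'ann]
      exact ⟨fun hb y => hb y, fun hb y => hb y⟩
    exact e1.trans (e2.trans e3)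
  · -- Part 2
    intro S _ _ _ _ hSsimple
    exact dual_simple e he hSsimple
  · -- Part 3
    rintro S₁ S₂ _ _ _ _ _ _ _ _ h1 h2 ⟨g⟩
    haveI := h1
    haveI := h2
    have hev1 := eval_bijective e he h1
    have hev2 := eval_bijective e he h2
    -- R-linear versions of g and g.symm
    let gL : (S₁ →ₗ[R] E) →ₗ[R] (S₂ →ₗ[R] E) :=
      { toFun := g
        map_add' := fun f₁ f₂ => map_add g f₁ f₂
        map_smul' := fun r f => by
          simp only [RingHom.id_apply]
          rw [← algebraMap_smul (Aᵐᵒᵖ) r f, map_smul, algebraMap_smul] }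
    let gsL : (S₂ →ₗ[R] E) →ₗ[R] (S₁ →ₗ[R] E) :=
      { toFun := g.symm
        map_add' := fun f₁ f₂ => map_add g.symm f₁ f₂
        map_smul' := fun r f => by
          simp only [RingHom.id_apply]
          rw [← algebraMap_smul (Aᵐᵒᵖ) r f, map_smul, algebraMap_smul] }
    let F : S₁ → S₂ := fun x => (Equiv.ofBijective _ hev2).symm ((evMap x) ∘ₗ gsL)
    let G : S₂ → S₁ := fun y => (Equiv.ofBijective _ hev1).symm ((evMap y) ∘ₗ gL)
    have hF : ∀ x, evMap (E := E) (F x) = (evMap x) ∘ₗ gsL :=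
      fun x => (Equiv.ofBijective _ hev2).apply_symm_apply _
    have hG : ∀ y, evMap (E := E) (G y) = (evMap y) ∘ₗ gL :=
      fun y => (Equiv.ofBijective _ hev1).apply_symm_apply _
    have key : ∀ (x : S₁) (f : S₂ →ₗ[R] E), f (F x) = (g.symm f) x := fun x f =>
      congrFun (congrArg (fun (Φ : (S₂ →ₗ[R] E) →ₗ[R] E) => (Φ : (S₂ →ₗ[R] E) → E)) (hF x)) f
    have keyG : ∀ (y : S₂) (f : S₁ →ₗ[R] E), f (G y) = (g f) y := fun y f =>
      congrFun (congrArg (fun (Φ : (S₁ →ₗ[R] E) →ₗ[R] E) => (Φ : (S₁ →ₗ[R] E) → E)) (hG y)) f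
    have evInj2 : ∀ {u v : S₂}, (∀ f : S₂ →ₗ[R] E, f u = f v) → u = v := by
      intro u v h
      apply hev2.1
      ext f
      exact h f
    have evInj1 : ∀ {u v : S₁}, (∀ f : S₁ →ₗ[R] E, f u = f v) → u = v := by
      intro u v h
      apply hev1.1
      ext f
      exact h f
    have F_add : ∀ x y, F (x + y) = F x + F y := by
      intro x y
      apply evInj2
      intro f
      rw [map_add, key, key, key, map_add]
    have F_smul : ∀ (a : A) (x : S₁), F (a • x) = a • F x := by
      intro a x
      apply evInj2
      intro f
      have h1 : f (a • F x) = (op a • f) (F x) := rfl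
      have h2 : g.symm (op a • f) = op a • g.symm f := map_smul g.symm (op a) f
      rw [key, h1, key, h2]
      rfl
    have FG : ∀ y, F (G y) = y := by
      intro y
      apply evInj2
      intro f
      rw [key, keyG, g.apply_symm_apply]
    have GF : ∀ x, G (F x) = x := by
      intro x
      apply evInj1
      intro f
      rw [keyG, key, g.symm_apply_apply]
    exact ⟨{ toFun := F, map_add' := F_add, map_smul' := F_smul, invFun := G,
             left_inv := GF, right_inv := FG }⟩
  · -- Part 4
    intro S' _ _ hS'
    haveI := hS'
    letI : Module R S' := Module.compHom S' (algebraMap R Aᵐᵒᵖ)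
    haveI : IsScalarTower R Aᵐᵒᵖ S' := ⟨fun r b x => by
      show (r • b) • x = algebraMap R Aᵐᵒᵖ r • (b • x)
      rw [Algebra.smul_def, mul_smul]⟩
    let SL : LeftModule R A := ⟨S' →ₗ[R] E⟩
    refine ⟨SL, ?_, ?_⟩
    · have hsimple2 : IsSimpleModule Aᵐᵒᵖᵐᵒᵖ (S' →ₗ[R] E) := dual_simple e he hS'
      exact isSimpleModule_op (fun a f => rfl) hsimple2
    · have hev := eval_bijective (B := Aᵐᵒᵖ) e he hS'
      let ev' : S' →ₗ[Aᵐᵒᵖ] ((S' →ₗ[R] E) →ₗ[R] E) :=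
        { toFun := fun x => evMap x
          map_add' := fun x y => by ext f; exact map_add f x y
          map_smul' := fun b x => by ext f; rfl }
      exact ⟨(LinearEquiv.ofBijective ev' hev).symm⟩
end
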